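/- arXiv:1211.5933 — 2 statements merged into one kernel-verified Lean document; each statement's English description precedes it below -/
import Mathlib

section
/- Let G be a finite prereduced graph and let H₁ and H₂ be holes of G such that H₁ ∩ N[H₂] ≠ ∅ (the holes are adjacent) but H₁ ⊄ N[H₂]. Then every vertex of H₁ ∩ N[H₂] is a common neighbor of H₂, i.e., H₁ ∩ N[H₂] ⊆ N̂(H₂); in particular, H₁ and H₂ are disjoint. -/
/-- A graph is an interval graph if each vertex can be assigned a (nonempty) closed real
interval such that two distinct vertices are adjacent iff their intervals intersect. -/
def IsIntervalGraph {V : Type*} (G : SimpleGraph V) : Prop :=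
  ∃ f : V → Set ℝ,
    (∀ v, ∃ a b : ℝ, a ≤ b ∧ f v = Set.Icc a b) ∧
    ∀ u v : V, u ≠ v → (G.Adj u v ↔ (f u ∩ f v).Nonempty)

/-- A hole is an induced (chordless) cycle on at least 4 vertices, identified
with its vertex set. -/
def IsHole {V : Type*} (G : SimpleGraph V) (H : Set V) : Prop :=
  ∃ m : ℕ, 4 ≤ m ∧ ∃ f : ZMod m → V,
    Function.Injective f ∧ Set.range f = H ∧
      ∀ i j : ZMod m, G.Adj (f i) (f j) ↔ (j = i + 1 ∨ i = j + 1)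

/-- A minimal forbidden set: the induced subgraph is not interval, but every
proper subset induces an interval graph. -/
def IsMinimalForbidden {V : Type*} (G : SimpleGraph V) (X : Set V) : Prop :=
  ¬ IsIntervalGraph (G.induce X) ∧ ∀ Y : Set V, Y ⊂ X → IsIntervalGraph (G.induce Y)

/-- A graph is prereduced if it has no minimal forbidden set of at most 10 vertices. -/
def Prereduced {V : Type*} (G : SimpleGraph V) : Prop :=
  ∀ X : Set V, X.ncard ≤ 10 → ¬ IsMinimalForbidden G X

/-- A module: any two vertices of `M` have exactly the same neighbors outside `M`. -/
def IsGraphModule {V : Type*} (G : SimpleGraph V) (M : Set V) : Prop :=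
  ∀ u ∈ M, ∀ v ∈ M, ∀ x ∉ M, (G.Adj u x ↔ G.Adj v x)

/-- A graph is reduced if it is prereduced and every nontrivial module induces a clique. -/
def Reduced {V : Type*} [Fintype V] (G : SimpleGraph V) : Prop :=
  Prereduced G ∧
    ∀ M : Set V, IsGraphModule G M → 1 < M.ncard → M.ncard < Fintype.card V →
      G.IsClique M

/-- Closed neighborhood `N[v]`. -/
def closedNbhd {V : Type*} (G : SimpleGraph V) (v : V) : Set V :=
  insert v (G.neighborSet v)

/-- Closed neighborhood of a set, `N[U] = ⋃ v ∈ U, N[v]`. -/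
def closedNbhdSet {V : Type*} (G : SimpleGraph V) (U : Set V) : Set V :=
  ⋃ v ∈ U, closedNbhd G v

/-- The set of common neighbors of a vertex set `X`. -/
def commonNbrs {V : Type*} (G : SimpleGraph V) (X : Set V) : Set V :=
  {v | ∀ x ∈ X, G.Adj v x}

/-- `P` induces a chordless path: it can be enumerated so that adjacency holds
exactly between consecutive vertices. -/
def IsInducedPath {V : Type*} (G : SimpleGraph V) (P : Set V) : Prop :=
  ∃ n : ℕ, ∃ f : Fin (n + 1) → V, Function.Injective f ∧ Set.range f = P ∧
    ∀ i j : Fin (n + 1), G.Adj (f i) (f j) ↔ (i.val + 1 = j.val ∨ j.val + 1 = i.val)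

/-- A shallow terminal: a vertex `s` contained in a minimal forbidden set `W` that is
not a hole, such that `W \ N[s]` induces a chordless path. -/
def ShallowTerminal {V : Type*} (G : SimpleGraph V) (s : V) : Prop :=
  ∃ W : Set V, IsMinimalForbidden G W ∧ s ∈ W ∧ ¬ IsHole G W ∧
    IsInducedPath G (W \ closedNbhd G s)

/-- A hole cover: a vertex set intersecting every hole. -/
def HoleCover {V : Type*} (G : SimpleGraph V) (C : Set V) : Prop :=
  ∀ H : Set V, IsHole G H → (C ∩ H).Nonempty

/-- A minimal hole cover: a hole cover no proper subset of which is a hole cover. -/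
def MinimalHoleCover {V : Type*} (G : SimpleGraph V) (C : Set V) : Prop :=
  HoleCover G C ∧ ∀ C' : Set V, C' ⊂ C → ¬ HoleCover G C'

/-- An interval deletion set: a vertex set whose removal leaves an interval graph. -/
def IntervalDeletionSet {V : Type*} (G : SimpleGraph V) (Q : Set V) : Prop :=
  IsIntervalGraph (G.induce Qᶜ)

/-- A minimum interval deletion set. -/
def MinIntervalDeletionSet {V : Type*} (G : SimpleGraph V) (Q : Set V) : Prop :=
  IntervalDeletionSet G Q ∧
    ∀ Q' : Set V, IntervalDeletionSet G Q' → Q.ncard ≤ Q'.ncard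

/-- Two holes are congenial if each is contained in the closed neighborhood of the other. -/
def Congenial {V : Type*} (G : SimpleGraph V) (H₁ H₂ : Set V) : Prop :=
  H₁ ⊆ closedNbhdSet G H₂ ∧ H₂ ⊆ closedNbhdSet G H₁

/-- The graph `G − S`: edges of `G` with both endpoints outside `S`
(vertices of `S` become isolated). -/
def deleteSet {V : Type*} (G : SimpleGraph V) (S : Set V) : SimpleGraph V where
  Adj u v := G.Adj u v ∧ u ∉ S ∧ v ∉ S
  symm := ⟨fun u v h => ⟨h.1.symm, h.2.2, h.2.1⟩⟩
  loopless := ⟨fun v h => G.loopless.irrefl v h.1⟩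

namespace Stmt13
open Set

/-! ### Interval arithmetic core -/

lemma icc_disj {a b c d : ℝ} (hab : a ≤ b) (hcd : c ≤ d)
    (h : ¬ (Set.Icc a b ∩ Set.Icc c d).Nonempty) : b < c ∨ d < a := by
  by_contra h'
  push_neg at h'
  exact h ⟨max a c, Set.mem_inter (Set.mem_Icc.mpr ⟨le_max_left _ _, max_le hab h'.1⟩)
    (Set.mem_Icc.mpr ⟨le_max_right _ _, max_le h'.2 hcd⟩)⟩

lemma icc_meet {a b c d : ℝ} (h : (Set.Icc a b ∩ Set.Icc c d).Nonempty) :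
    ∃ p, a ≤ p ∧ p ≤ b ∧ c ≤ p ∧ p ≤ d := by
  obtain ⟨p, hp1, hp2⟩ := h
  exact ⟨p, hp1.1, hp1.2, hp2.1, hp2.2⟩

lemma sides_step {lu ru lv rv lc rc : ℝ}
    (du : ru < lc ∨ rc < lu) (dv : rv < lc ∨ rc < lv)
    (meet : ∃ p, lu ≤ p ∧ p ≤ ru ∧ lv ≤ p ∧ p ≤ rv) (hc : lc ≤ rc) :
    (ru < lc ∧ rv < lc) ∨ (rc < lu ∧ rc < lv) := by
  obtain ⟨p, h1, h2, h3, h4⟩ := meet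
  rcases du with du | du <;> rcases dv with dv | dv
  · exact Or.inl ⟨du, dv⟩
  · exfalso; linarith
  · exfalso; linarith
  · exact Or.inr ⟨du, dv⟩

lemma sides_trans {l1 r1 l2 r2 l3 r3 lc rc : ℝ} (h2 : l2 ≤ r2) (hc : lc ≤ rc)
    (p12 : (r1 < lc ∧ r2 < lc) ∨ (rc < l1 ∧ rc < l2))
    (p23 : (r2 < lc ∧ r3 < lc) ∨ (rc < l2 ∧ rc < l3)) :
    (r1 < lc ∧ r3 < lc) ∨ (rc < l1 ∧ rc < l3) := by
  rcases p12 with ⟨a1, a2⟩ | ⟨a1, a2⟩ <;> rcases p23 with ⟨b1, b2⟩ | ⟨b1, b2⟩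
  · exact Or.inl ⟨a1, b2⟩
  · exfalso; linarith
  · exfalso; linarith
  · exact Or.inr ⟨a1, b2⟩

lemma three_sides {l1 r1 l2 r2 l3 r3 : ℝ} (h1 : l1 ≤ r1) (h2 : l2 ≤ r2) (h3 : l3 ≤ r3)
    (s12 : (r1 < l3 ∧ r2 < l3) ∨ (r3 < l1 ∧ r3 < l2))
    (s13 : (r1 < l2 ∧ r3 < l2) ∨ (r2 < l1 ∧ r2 < l3))
    (s23 : (r2 < l1 ∧ r3 < l1) ∨ (r1 < l2 ∧ r1 < l3)) : False := by
  rcases s12 with ⟨a1, a2⟩ | ⟨a1, a2⟩ <;> rcases s13 with ⟨b1, b2⟩ | ⟨b1, b2⟩ <;>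
    rcases s23 with ⟨c1, c2⟩ | ⟨c1, c2⟩ <;> linarith

/-! ### Extracting an interval model for an induced subgraph -/

lemma extract {V : Type*} {G : SimpleGraph V} {X : Set V}
    (h : IsIntervalGraph (G.induce X)) :
    ∃ g : V → Set ℝ,
      (∀ v, v ∈ X → ∃ a b : ℝ, a ≤ b ∧ g v = Set.Icc a b) ∧
      (∀ u v : V, u ∈ X → v ∈ X → u ≠ v → (G.Adj u v ↔ (g u ∩ g v).Nonempty)) := by
  classical
  obtain ⟨f, hf1, hf2⟩ := h
  refine ⟨fun v => if hv : v ∈ X then f ⟨v, hv⟩ else ∅, ?_, ?_⟩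
  · intro v hv
    simpa [hv] using hf1 ⟨v, hv⟩
  · intro u v hu hv huv
    have hne : (⟨u, hu⟩ : X) ≠ ⟨v, hv⟩ := fun hh => huv (by injection hh)
    have := hf2 ⟨u, hu⟩ ⟨v, hv⟩ hne
    simpa [hu, hv] using this

/-! ### No induced cycle of length ≥ 4 in an interval graph -/

lemma cyc_not_interval {V : Type*} {G : SimpleGraph V} {X : Set V}
    (hX : IsIntervalGraph (G.induce X))
    (n : ℕ) (hn : 4 ≤ n) (p : ℕ → V)
    (hmem : ∀ k, k < n → p k ∈ X)
    (hadj : ∀ k, k + 2 ≤ n → G.Adj (p k) (p (k + 1)))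
    (hwrap : G.Adj (p (n - 1)) (p 0))
    (h2 : ∀ k, k + 3 ≤ n → ¬ G.Adj (p k) (p (k + 2)) ∧ p k ≠ p (k + 2))
    (hw1 : ¬ G.Adj (p (n - 2)) (p 0) ∧ p (n - 2) ≠ p 0)
    (hw2 : ¬ G.Adj (p (n - 1)) (p 1) ∧ p (n - 1) ≠ p 1) : False := by
  classical
  obtain ⟨g, hg1, hg2⟩ := extract hX
  -- choose interval endpoints for each cycle vertex
  have hIcc : ∀ k, ∃ ab : ℝ × ℝ, k < n → ab.1 ≤ ab.2 ∧ g (p k) = Set.Icc ab.1 ab.2 := by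
    intro k
    by_cases hk : k < n
    · obtain ⟨a, b, hab, he⟩ := hg1 (p k) (hmem k hk)
      exact ⟨(a, b), fun _ => ⟨hab, he⟩⟩
    · exact ⟨(0, 0), fun h => absurd h hk⟩
  choose F hF using hIcc
  obtain ⟨i, hi, hmax⟩ := Finset.exists_max_image (Finset.range n) (fun k => (F k).1) ⟨0, by
    simp; omega⟩
  rw [Finset.mem_range] at hi
  -- previous and next indices on the cycle
  set prev : ℕ := if i = 0 then n - 1 else i - 1 with hprev
  set next : ℕ := if i = n - 1 then 0 else i + 1 with hnext
  have hprevlt : prev < n := by rw [hprev]; split <;> omega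
  have hnextlt : next < n := by rw [hnext]; split <;> omega
  have hadj1 : G.Adj (p prev) (p i) := by
    rw [hprev]
    by_cases h0 : i = 0
    · simp only [h0, if_pos rfl]; exact h0 ▸ hwrap
    · rw [if_neg h0]
      have := hadj (i - 1) (by omega)
      have he : i - 1 + 1 = i := by omega
      rwa [he] at this
  have hadj2 : G.Adj (p i) (p next) := by
    rw [hnext]
    by_cases h0 : i = n - 1
    · rw [if_pos h0, h0]; exact hwrap
    · rw [if_neg h0]
      exact hadj i (by omega)
  have hpn : (¬ G.Adj (p prev) (p next)) ∧ p prev ≠ p next := by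
    rw [hprev, hnext]
    by_cases h0 : i = 0
    · have : ¬ (i = n - 1) := by omega
      rw [if_pos h0, if_neg this, h0]
      exact hw2
    · by_cases h1 : i = n - 1
      · rw [if_neg h0, if_pos h1, h1]
        have he : n - 1 - 1 = n - 2 := by omega
        rw [he]
        exact hw1
      · rw [if_neg h0, if_neg h1]
        have := h2 (i - 1) (by omega)
        have he : i - 1 + 2 = i + 1 := by omega
        rwa [he] at this
  -- interval facts
  have hFi := hF i hi
  have hFprev := hF prev hprevlt
  have hFnext := hF next hnextlt
  have hm1 : (g (p prev) ∩ g (p i)).Nonempty :=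
    (hg2 _ _ (hmem _ hprevlt) (hmem _ hi) hadj1.ne).mp hadj1
  have hm2 : (g (p i) ∩ g (p next)).Nonempty :=
    (hg2 _ _ (hmem _ hi) (hmem _ hnextlt) hadj2.ne).mp hadj2
  rw [hFprev.2, hFi.2] at hm1
  rw [hFi.2, hFnext.2] at hm2
  obtain ⟨q1, hq1a, hq1b, hq1c, _⟩ := icc_meet hm1
  obtain ⟨q2, hq2a, _, _, hq2d⟩ := icc_meet hm2
  have hLprev : (F prev).1 ≤ (F i).1 := hmax prev (Finset.mem_range.mpr hprevlt)
  have hLnext : (F next).1 ≤ (F i).1 := hmax next (Finset.mem_range.mpr hnextlt)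
  have : (g (p prev) ∩ g (p next)).Nonempty := by
    rw [hFprev.2, hFnext.2]
    exact ⟨(F i).1, ⟨hLprev, le_trans hq1c hq1b⟩, ⟨hLnext, le_trans hq2a hq2d⟩⟩
  exact hpn.1 ((hg2 _ _ (hmem _ hprevlt) (hmem _ hnextlt) hpn.2).mpr this)

/-! ### Prereduced graphs: all small induced subgraphs are interval -/

lemma small_interval {V : Type*} [Fintype V] {G : SimpleGraph V} (hG : Prereduced G) :
    ∀ X : Set V, X.ncard ≤ 10 → IsIntervalGraph (G.induce X) := by
  have key : ∀ n : ℕ, ∀ X : Set V, X.ncard = n → X.ncard ≤ 10 →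
      IsIntervalGraph (G.induce X) := by
    intro n
    induction n using Nat.strong_induction_on with
    | _ n IH =>
      intro X hn h10
      by_contra hni
      refine hG X h10 ⟨hni, ?_⟩
      intro Y hY
      have hlt : Y.ncard < X.ncard := Set.ncard_lt_ncard hY (Set.toFinite X)
      exact IH Y.ncard (hn ▸ hlt) Y rfl (by omega)
  intro X hX
  exact key X.ncard X rfl hX

/-! ### Shape lemmas: spider (long claw), net, sandwich -/

/-- A "spider" / long claw: center `c` with three legs `c-m₁-a₁`, `c-m₂-a₂`, `c-m₃-a₃`.
Nonadjacency (with distinctness) is required between each asteroid `aᵢ` and all vertices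
of the other two legs (and the center). This is an asteroidal-triple configuration,
hence not an interval graph. -/
lemma spider_not_interval {V : Type*} {G : SimpleGraph V} {X : Set V}
    (hX : IsIntervalGraph (G.induce X))
    (c m1 a1 m2 a2 m3 a3 : V)
    (Mc : c ∈ X) (Mm1 : m1 ∈ X) (Ma1 : a1 ∈ X) (Mm2 : m2 ∈ X) (Ma2 : a2 ∈ X)
    (Mm3 : m3 ∈ X) (Ma3 : a3 ∈ X)
    (e1 : G.Adj c m1) (e2 : G.Adj c m2) (e3 : G.Adj c m3)
    (f1 : G.Adj m1 a1) (f2 : G.Adj m2 a2) (f3 : G.Adj m3 a3)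
    (ca1 : ¬ G.Adj c a1 ∧ c ≠ a1) (ca2 : ¬ G.Adj c a2 ∧ c ≠ a2) (ca3 : ¬ G.Adj c a3 ∧ c ≠ a3)
    (m1a2 : ¬ G.Adj m1 a2 ∧ m1 ≠ a2) (m1a3 : ¬ G.Adj m1 a3 ∧ m1 ≠ a3)
    (m2a1 : ¬ G.Adj m2 a1 ∧ m2 ≠ a1) (m2a3 : ¬ G.Adj m2 a3 ∧ m2 ≠ a3)
    (m3a1 : ¬ G.Adj m3 a1 ∧ m3 ≠ a1) (m3a2 : ¬ G.Adj m3 a2 ∧ m3 ≠ a2)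
    (a12 : ¬ G.Adj a1 a2 ∧ a1 ≠ a2) (a13 : ¬ G.Adj a1 a3 ∧ a1 ≠ a3)
    (a23 : ¬ G.Adj a2 a3 ∧ a2 ≠ a3) : False := by
  obtain ⟨g, hg1, hg2⟩ := extract hX
  obtain ⟨lc, rc, hc, Ec⟩ := hg1 c Mc
  obtain ⟨l1, r1, h1, E1⟩ := hg1 m1 Mm1
  obtain ⟨la1, ra1, ha1, Ea1⟩ := hg1 a1 Ma1
  obtain ⟨l2, r2, h2, E2⟩ := hg1 m2 Mm2
  obtain ⟨la2, ra2, ha2, Ea2⟩ := hg1 a2 Ma2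
  obtain ⟨l3, r3, h3, E3⟩ := hg1 m3 Mm3
  obtain ⟨la3, ra3, ha3, Ea3⟩ := hg1 a3 Ma3
  -- meets along edges
  have mt1 : ∃ p, lc ≤ p ∧ p ≤ rc ∧ l1 ≤ p ∧ p ≤ r1 := by
    have := (hg2 c m1 Mc Mm1 e1.ne).mp e1; rw [Ec, E1] at this; exact icc_meet this
  have mt2 : ∃ p, lc ≤ p ∧ p ≤ rc ∧ l2 ≤ p ∧ p ≤ r2 := by
    have := (hg2 c m2 Mc Mm2 e2.ne).mp e2; rw [Ec, E2] at this; exact icc_meet this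
  have mt3 : ∃ p, lc ≤ p ∧ p ≤ rc ∧ l3 ≤ p ∧ p ≤ r3 := by
    have := (hg2 c m3 Mc Mm3 e3.ne).mp e3; rw [Ec, E3] at this; exact icc_meet this
  have mf1 : ∃ p, l1 ≤ p ∧ p ≤ r1 ∧ la1 ≤ p ∧ p ≤ ra1 := by
    have := (hg2 m1 a1 Mm1 Ma1 f1.ne).mp f1; rw [E1, Ea1] at this; exact icc_meet this
  have mf2 : ∃ p, l2 ≤ p ∧ p ≤ r2 ∧ la2 ≤ p ∧ p ≤ ra2 := by
    have := (hg2 m2 a2 Mm2 Ma2 f2.ne).mp f2; rw [E2, Ea2] at this; exact icc_meet this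
  have mf3 : ∃ p, l3 ≤ p ∧ p ≤ r3 ∧ la3 ≤ p ∧ p ≤ ra3 := by
    have := (hg2 m3 a3 Mm3 Ma3 f3.ne).mp f3; rw [E3, Ea3] at this; exact icc_meet this
  -- disjointness facts (as side disjunctions)
  have disj : ∀ {u v : V} {lu ru lv rv : ℝ}, u ∈ X → v ∈ X →
      (¬ G.Adj u v ∧ u ≠ v) → lu ≤ ru → lv ≤ rv →
      g u = Set.Icc lu ru → g v = Set.Icc lv rv → ru < lv ∨ rv < lu := by
    intro u v lu ru lv rv hu hv hna hlu hlv hEu hEv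
    refine icc_disj hlu hlv ?_
    intro hne
    exact hna.1 ((hg2 u v hu hv hna.2).mpr (by rw [hEu, hEv]; exact hne))
  -- sides relative to a3 : path a1 m1 c m2 a2
  have dA1 := disj Ma1 Ma3 a13 ha1 ha3 Ea1 Ea3
  have dM1 := disj Mm1 Ma3 m1a3 h1 ha3 E1 Ea3
  have dC3 := disj Mc Ma3 ca3 hc ha3 Ec Ea3
  have dM2 := disj Mm2 Ma3 m2a3 h2 ha3 E2 Ea3
  have dA2 := disj Ma2 Ma3 a23 ha2 ha3 Ea2 Ea3
  have s1 := sides_step dA1 dM1 (by obtain ⟨p, q1, q2, q3, q4⟩ := mf1; exact ⟨p, q3, q4, q1, q2⟩) ha3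
  have s2 := sides_step dM1 dC3 (by obtain ⟨p, q1, q2, q3, q4⟩ := mt1; exact ⟨p, q3, q4, q1, q2⟩) ha3
  have s3 := sides_step dC3 dM2 mt2 ha3
  have s4 := sides_step dM2 dA2 mf2 ha3
  have S12 := sides_trans hc ha3 (sides_trans h1 ha3 s1 s2) (sides_trans h2 ha3 s3 s4)
  -- sides relative to a2 : path a1 m1 c m3 a3
  have dA1' := disj Ma1 Ma2 a12 ha1 ha2 Ea1 Ea2
  have dM1' := disj Mm1 Ma2 m1a2 h1 ha2 E1 Ea2
  have dC2 := disj Mc Ma2 ca2 hc ha2 Ec Ea2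
  have dM3' := disj Mm3 Ma2 m3a2 h3 ha2 E3 Ea2
  have dA3' := disj Ma3 Ma2 (⟨fun h => a23.1 h.symm, fun h => a23.2 h.symm⟩) ha3 ha2 Ea3 Ea2
  have t1 := sides_step dA1' dM1' (by obtain ⟨p, q1, q2, q3, q4⟩ := mf1; exact ⟨p, q3, q4, q1, q2⟩) ha2
  have t2 := sides_step dM1' dC2 (by obtain ⟨p, q1, q2, q3, q4⟩ := mt1; exact ⟨p, q3, q4, q1, q2⟩) ha2
  have t3 := sides_step dC2 dM3' mt3 ha2
  have t4 := sides_step dM3' dA3' mf3 ha2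
  have S13 := sides_trans hc ha2 (sides_trans h1 ha2 t1 t2) (sides_trans h3 ha2 t3 t4)
  -- sides relative to a1 : path a2 m2 c m3 a3
  have dA2'' := disj Ma2 Ma1 (⟨fun h => a12.1 h.symm, fun h => a12.2 h.symm⟩) ha2 ha1 Ea2 Ea1
  have dM2'' := disj Mm2 Ma1 m2a1 h2 ha1 E2 Ea1
  have dC1 := disj Mc Ma1 ca1 hc ha1 Ec Ea1
  have dM3'' := disj Mm3 Ma1 m3a1 h3 ha1 E3 Ea1
  have dA3'' := disj Ma3 Ma1 (⟨fun h => a13.1 h.symm, fun h => a13.2 h.symm⟩) ha3 ha1 Ea3 Ea1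
  have u1 := sides_step dA2'' dM2'' (by obtain ⟨p, q1, q2, q3, q4⟩ := mf2; exact ⟨p, q3, q4, q1, q2⟩) ha1
  have u2 := sides_step dM2'' dC1 (by obtain ⟨p, q1, q2, q3, q4⟩ := mt2; exact ⟨p, q3, q4, q1, q2⟩) ha1
  have u3 := sides_step dC1 dM3'' mt3 ha1
  have u4 := sides_step dM3'' dA3'' mf3 ha1
  have S23 := sides_trans hc ha1 (sides_trans h2 ha1 u1 u2) (sides_trans h3 ha1 u3 u4)
  exact three_sides ha1 ha2 ha3 S12 S13 S23

/-- The net: a triangle `x a b` with pendant vertices `u` (on `x`), `p` (on `a`),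
`q` (on `b`). Not an interval graph. -/
lemma net_not_interval {V : Type*} {G : SimpleGraph V} {X : Set V}
    (hX : IsIntervalGraph (G.induce X))
    (x a b u p q : V)
    (Mx : x ∈ X) (Ma : a ∈ X) (Mb : b ∈ X) (Mu : u ∈ X) (Mp : p ∈ X) (Mq : q ∈ X)
    (exa : G.Adj x a) (exb : G.Adj x b) (eab : G.Adj a b)
    (exu : G.Adj x u) (eap : G.Adj a p) (ebq : G.Adj b q)
    (ua : ¬ G.Adj u a ∧ u ≠ a) (ub : ¬ G.Adj u b ∧ u ≠ b)
    (up : ¬ G.Adj u p ∧ u ≠ p) (uq : ¬ G.Adj u q ∧ u ≠ q)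
    (px : ¬ G.Adj p x ∧ p ≠ x) (pb : ¬ G.Adj p b ∧ p ≠ b) (pq : ¬ G.Adj p q ∧ p ≠ q)
    (qx : ¬ G.Adj q x ∧ q ≠ x) (qa : ¬ G.Adj q a ∧ q ≠ a) : False := by
  obtain ⟨g, hg1, hg2⟩ := extract hX
  obtain ⟨lx, rx, hx, Ex⟩ := hg1 x Mx
  obtain ⟨la, ra, ha, Ea⟩ := hg1 a Ma
  obtain ⟨lb, rb, hb, Eb⟩ := hg1 b Mb
  obtain ⟨lu, ru, hu, Eu⟩ := hg1 u Mu
  obtain ⟨lp, rp, hp, Ep⟩ := hg1 p Mp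
  obtain ⟨lq, rq, hq, Eq'⟩ := hg1 q Mq
  have meet : ∀ {v w : V} {lv rv lw rw : ℝ}, v ∈ X → w ∈ X → G.Adj v w →
      g v = Set.Icc lv rv → g w = Set.Icc lw rw →
      ∃ t, lv ≤ t ∧ t ≤ rv ∧ lw ≤ t ∧ t ≤ rw := by
    intro v w lv rv lw rw hv hw hvw hEv hEw
    have := (hg2 v w hv hw hvw.ne).mp hvw; rw [hEv, hEw] at this; exact icc_meet this
  have disj : ∀ {v w : V} {lv rv lw rw : ℝ}, v ∈ X → w ∈ X →
      (¬ G.Adj v w ∧ v ≠ w) → lv ≤ rv → lw ≤ rw →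
      g v = Set.Icc lv rv → g w = Set.Icc lw rw → rv < lw ∨ rw < lv := by
    intro v w lv rv lw rw hv hw hna hlv hlw hEv hEw
    refine icc_disj hlv hlw ?_
    intro hne
    exact hna.1 ((hg2 v w hv hw hna.2).mpr (by rw [hEv, hEw]; exact hne))
  have mxa := meet Mx Ma exa Ex Ea
  have mxb := meet Mx Mb exb Ex Eb
  have mab := meet Ma Mb eab Ea Eb
  have mxu := meet Mx Mu exu Ex Eu
  have map := meet Ma Mp eap Ea Ep
  have mbq := meet Mb Mq ebq Eb Eq'
  -- relative q : path u x a p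
  have dUq := disj Mu Mq uq hu hq Eu Eq'
  have dXq := disj Mx Mq (⟨fun h => qx.1 h.symm, fun h => qx.2 h.symm⟩) hx hq Ex Eq'
  have dAq := disj Ma Mq (⟨fun h => qa.1 h.symm, fun h => qa.2 h.symm⟩) ha hq Ea Eq'
  have dPq := disj Mp Mq pq hp hq Ep Eq'
  have s1 := sides_step dUq dXq (by obtain ⟨t, q1, q2, q3, q4⟩ := mxu; exact ⟨t, q3, q4, q1, q2⟩) hq
  have s2 := sides_step dXq dAq mxa hq
  have s3 := sides_step dAq dPq map hq
  have SUP_q := sides_trans hx hq s1 (sides_trans ha hq s2 s3)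
  -- relative p : path u x b q
  have dUp := disj Mu Mp up hu hp Eu Ep
  have dXp := disj Mx Mp (⟨fun h => px.1 h.symm, fun h => px.2 h.symm⟩) hx hp Ex Ep
  have dBp := disj Mb Mp (⟨fun h => pb.1 h.symm, fun h => pb.2 h.symm⟩) hb hp Eb Ep
  have dQp := disj Mq Mp (⟨fun h => pq.1 h.symm, fun h => pq.2 h.symm⟩) hq hp Eq' Ep
  have t1 := sides_step dUp dXp (by obtain ⟨t, q1, q2, q3, q4⟩ := mxu; exact ⟨t, q3, q4, q1, q2⟩) hp
  have t2 := sides_step dXp dBp mxb hp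
  have t3 := sides_step dBp dQp mbq hp
  have SUQ_p := sides_trans hx hp t1 (sides_trans hb hp t2 t3)
  -- relative u : path p a b q
  have dPu := disj Mp Mu (⟨fun h => up.1 h.symm, fun h => up.2 h.symm⟩) hp hu Ep Eu
  have dAu := disj Ma Mu (⟨fun h => ua.1 h.symm, fun h => ua.2 h.symm⟩) ha hu Ea Eu
  have dBu := disj Mb Mu (⟨fun h => ub.1 h.symm, fun h => ub.2 h.symm⟩) hb hu Eb Eu
  have dQu := disj Mq Mu (⟨fun h => uq.1 h.symm, fun h => uq.2 h.symm⟩) hq hu Eq' Eu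
  have u1 := sides_step dPu dAu (by obtain ⟨t, q1, q2, q3, q4⟩ := map; exact ⟨t, q3, q4, q1, q2⟩) hu
  have u2 := sides_step dAu dBu mab hu
  have u3 := sides_step dBu dQu mbq hu
  have SPQ_u := sides_trans ha hu u1 (sides_trans hb hu u2 u3)
  exact three_sides hp hq hu SPQ_u (SUP_q.imp (fun h => ⟨h.2, h.1⟩) (fun h => ⟨h.2, h.1⟩))
    (SUQ_p.imp (fun h => ⟨h.2, h.1⟩) (fun h => ⟨h.2, h.1⟩))

/-- The sandwich: an induced path `v1 v2 v3 v4 v5`, a vertex `y` meeting `v1` and `v5`,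
and a vertex `w` adjacent to `v3` but not to `y`. Not an interval graph. -/
lemma sandwich_not_interval {V : Type*} {G : SimpleGraph V} {X : Set V}
    (hX : IsIntervalGraph (G.induce X))
    (v1 v2 v3 v4 v5 y w : V)
    (M1 : v1 ∈ X) (M2 : v2 ∈ X) (M3 : v3 ∈ X) (M4 : v4 ∈ X) (M5 : v5 ∈ X)
    (My : y ∈ X) (Mw : w ∈ X)
    (e12 : G.Adj v1 v2) (e23 : G.Adj v2 v3) (e34 : G.Adj v3 v4) (e45 : G.Adj v4 v5)
    (ey1 : G.Adj y v1) (ey5 : G.Adj y v5) (ew3 : G.Adj w v3)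
    (d13 : ¬ G.Adj v1 v3 ∧ v1 ≠ v3) (d35 : ¬ G.Adj v3 v5 ∧ v3 ≠ v5)
    (d15 : ¬ G.Adj v1 v5 ∧ v1 ≠ v5) (d25 : ¬ G.Adj v2 v5 ∧ v2 ≠ v5)
    (d14 : ¬ G.Adj v1 v4 ∧ v1 ≠ v4) (dwy : ¬ G.Adj w y ∧ w ≠ y) : False := by
  obtain ⟨g, hg1, hg2⟩ := extract hX
  obtain ⟨l1, r1, h1, E1⟩ := hg1 v1 M1
  obtain ⟨l2, r2, h2, E2⟩ := hg1 v2 M2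
  obtain ⟨l3, r3, h3, E3⟩ := hg1 v3 M3
  obtain ⟨l4, r4, h4, E4⟩ := hg1 v4 M4
  obtain ⟨l5, r5, h5, E5⟩ := hg1 v5 M5
  obtain ⟨ly, ry, hy, Ey⟩ := hg1 y My
  obtain ⟨lw, rw', hw, Ew⟩ := hg1 w Mw
  have meet : ∀ {v u : V} {lv rv lu ru : ℝ}, v ∈ X → u ∈ X → G.Adj v u →
      g v = Set.Icc lv rv → g u = Set.Icc lu ru →
      ∃ t, lv ≤ t ∧ t ≤ rv ∧ lu ≤ t ∧ t ≤ ru := by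
    intro v u lv rv lu ru hv hu hvu hEv hEu
    have := (hg2 v u hv hu hvu.ne).mp hvu; rw [hEv, hEu] at this; exact icc_meet this
  have disj : ∀ {v u : V} {lv rv lu ru : ℝ}, v ∈ X → u ∈ X →
      (¬ G.Adj v u ∧ v ≠ u) → lv ≤ rv → lu ≤ ru →
      g v = Set.Icc lv rv → g u = Set.Icc lu ru → rv < lu ∨ ru < lv := by
    intro v u lv rv lu ru hv hu hna hlv hlu hEv hEu
    refine icc_disj hlv hlu ?_
    intro hne
    exact hna.1 ((hg2 v u hv hu hna.2).mpr (by rw [hEv, hEu]; exact hne))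
  obtain ⟨p12, hp12a, hp12b, hp12c, hp12d⟩ := meet M1 M2 e12 E1 E2
  obtain ⟨p23, hp23a, hp23b, hp23c, hp23d⟩ := meet M2 M3 e23 E2 E3
  obtain ⟨p34, hp34a, hp34b, hp34c, hp34d⟩ := meet M3 M4 e34 E3 E4
  obtain ⟨p45, hp45a, hp45b, hp45c, hp45d⟩ := meet M4 M5 e45 E4 E5
  obtain ⟨pY1, hY1a, hY1b, hY1c, hY1d⟩ := meet My M1 ey1 Ey E1
  obtain ⟨pY5, hY5a, hY5b, hY5c, hY5d⟩ := meet My M5 ey5 Ey E5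
  obtain ⟨pW3, hW3a, hW3b, hW3c, hW3d⟩ := meet Mw M3 ew3 Ew E3
  have D13 := disj M1 M3 d13 h1 h3 E1 E3
  have D35 := disj M3 M5 d35 h3 h5 E3 E5
  have D15 := disj M1 M5 d15 h1 h5 E1 E5
  have D25 := disj M2 M5 d25 h2 h5 E2 E5
  have D14 := disj M1 M4 d14 h1 h4 E1 E4
  have DWY := disj Mw My dwy hw hy Ew Ey
  rcases D13 with hA | hA <;> rcases D35 with hB | hB
  · -- r1 < l3 and r3 < l5 : y contains I3, w meets y
    rcases DWY with hD | hD
    · linarith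
    · linarith
  · -- r1 < l3 and r5 < l3 : both left of I3
    rcases D15 with hC | hC
    · -- r1 < l5 : I2 meets I5 : contradiction with D25
      rcases D25 with hD | hD <;> linarith
    · -- r5 < l1 : I4 meets I1 : contradiction with D14
      rcases D14 with hD | hD <;> linarith
  · -- r3 < l1 and r3 < l5 : both right of I3
    rcases D15 with hC | hC
    · -- r1 < l5 : I4 contains l1
      rcases D14 with hD | hD <;> linarith
    · -- r5 < l1 : I2 contains l5
      rcases D25 with hD | hD <;> linarith
  · -- r3 < l1 and r5 < l3 : mirrored containment
    rcases DWY with hD | hD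
    · linarith
    · linarith

/-! ### Hole infrastructure -/

section Holes

variable {V : Type*} {G : SimpleGraph V} {m : ℕ} {f : ZMod m → V}

lemma hole_succ (hADJ : ∀ i j, G.Adj (f i) (f j) ↔ (j = i + 1 ∨ i = j + 1))
    (j : ZMod m) : G.Adj (f j) (f (j + 1)) :=
  (hADJ j (j + 1)).mpr (Or.inl rfl)

lemma hole_nonadj (hm : 4 ≤ m) (hinj : Function.Injective f)
    (hADJ : ∀ i j, G.Adj (f i) (f j) ↔ (j = i + 1 ∨ i = j + 1))
    (i : ZMod m) (a b : ℕ) (h1 : a + 2 ≤ b) (h2 : b + 2 ≤ a + m) :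
    ¬ G.Adj (f (i + (a : ZMod m))) (f (i + (b : ZMod m))) ∧
      f (i + (a : ZMod m)) ≠ f (i + (b : ZMod m)) := by
  haveI : NeZero m := ⟨by omega⟩
  have key : ∀ c : ℕ, 0 < c → c < m → ((c : ZMod m) ≠ 0) := by
    intro c hc1 hc2 h
    have hd := (ZMod.natCast_eq_zero_iff c m).mp h
    have := Nat.le_of_dvd hc1 hd
    omega
  constructor
  · intro hadj
    rw [hADJ] at hadj
    rcases hadj with h | h
    · -- i + b = (i + a) + 1
      have hb' : (b : ZMod m) = (a : ZMod m) + 1 := by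
        have := h
        rw [add_assoc] at this
        exact add_left_cancel this
      have hbn : b = (a + 1) + (b - (a + 1)) := by omega
      rw [hbn] at hb'
      push_cast at hb'
      have : ((b - (a + 1) : ℕ) : ZMod m) = 0 := by
        have := hb'
        linear_combination this
      exact key (b - (a + 1)) (by omega) (by omega) this
    · -- i + a = (i + b) + 1
      have hb' : (a : ZMod m) = (b : ZMod m) + 1 := by
        have := h
        rw [add_assoc] at this
        exact add_left_cancel this
      have hbn : b + 1 = a + (b + 1 - a) := by omega
      have : ((b + 1 - a : ℕ) : ZMod m) = 0 := by
        have h2' : ((b + 1 : ℕ) : ZMod m) = ((a + (b + 1 - a) : ℕ) : ZMod m) := by rw [← hbn]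
        push_cast at h2'
        linear_combination - h2' - hb'
      exact key (b + 1 - a) (by omega) (by omega) this
  · intro heq
    have := hinj heq
    have hab : (a : ZMod m) = (b : ZMod m) := add_left_cancel this
    have hbn : b = a + (b - a) := by omega
    have : ((b - a : ℕ) : ZMod m) = 0 := by
      have h2' : ((b : ℕ) : ZMod m) = ((a + (b - a) : ℕ) : ZMod m) := by rw [← hbn]
      push_cast at h2'
      linear_combination - h2' - hab
    exact key (b - a) (by omega) (by omega) this

/-- In a graph whose small induced subgraphs are all interval, every hole has
at least 11 vertices. -/
lemma hole_ge_11 (hSmall : ∀ X : Set V, X.ncard ≤ 10 → IsIntervalGraph (G.induce X))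
    (hm : 4 ≤ m) (hinj : Function.Injective f)
    (hADJ : ∀ i j, G.Adj (f i) (f j) ↔ (j = i + 1 ∨ i = j + 1)) : 11 ≤ m := by
  haveI : NeZero m := ⟨by omega⟩
  by_contra hm10
  push_neg at hm10
  have hcard : (Set.range f).ncard ≤ 10 := by
    rw [← Set.image_univ]
    calc (f '' Set.univ).ncard ≤ (Set.univ : Set (ZMod m)).ncard :=
          Set.ncard_image_le (Set.finite_univ)
      _ = Nat.card (ZMod m) := Set.ncard_univ _
      _ = m := by rw [Nat.card_eq_fintype_card, ZMod.card]
      _ ≤ 10 := by omega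
  refine cyc_not_interval (hSmall _ hcard) m hm (fun k => f (k : ZMod m)) ?_ ?_ ?_ ?_ ?_ ?_
  · intro k _; exact Set.mem_range_self _
  · intro k _
    show G.Adj (f ((k : ℕ) : ZMod m)) (f ((k + 1 : ℕ) : ZMod m))
    have hc : ((k + 1 : ℕ) : ZMod m) = (k : ZMod m) + 1 := by push_cast; ring
    rw [hc]
    exact hole_succ hADJ _
  · show G.Adj (f ((m - 1 : ℕ) : ZMod m)) (f ((0 : ℕ) : ZMod m))
    have hc : ((m - 1 : ℕ) : ZMod m) + 1 = ((0 : ℕ) : ZMod m) := by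
      rw [← Nat.cast_add_one]
      have he : m - 1 + 1 = m := by omega
      rw [he, ZMod.natCast_self, Nat.cast_zero]
    refine (hADJ _ _).mpr (Or.inl ?_)
    rw [hc]
  · intro k hk
    show ¬ G.Adj (f ((k : ℕ) : ZMod m)) (f ((k + 2 : ℕ) : ZMod m)) ∧
      f ((k : ℕ) : ZMod m) ≠ f ((k + 2 : ℕ) : ZMod m)
    have h := hole_nonadj hm hinj hADJ 0 k (k + 2) (by omega) (by omega)
    simp only [zero_add] at h
    exact h
  · show ¬ G.Adj (f ((m - 2 : ℕ) : ZMod m)) (f ((0 : ℕ) : ZMod m)) ∧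
      f ((m - 2 : ℕ) : ZMod m) ≠ f ((0 : ℕ) : ZMod m)
    have h := hole_nonadj hm hinj hADJ 0 0 (m - 2) (by omega) (by omega)
    simp only [zero_add] at h
    exact ⟨fun hh => h.1 hh.symm, fun hh => h.2 hh.symm⟩
  · show ¬ G.Adj (f ((m - 1 : ℕ) : ZMod m)) (f ((1 : ℕ) : ZMod m)) ∧
      f ((m - 1 : ℕ) : ZMod m) ≠ f ((1 : ℕ) : ZMod m)
    have h := hole_nonadj hm hinj hADJ 0 1 (m - 1) (by omega) (by omega)
    simp only [zero_add] at h
    exact ⟨fun hh => h.1 hh.symm, fun hh => h.2 hh.symm⟩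

/-- Gap lemma: if `x` is adjacent to `f i` but not `f (i+1)`, then `x` is not adjacent
to any of `f (i+2), …, f (i+8)`. -/
lemma hole_gap (hSmall : ∀ X : Set V, X.ncard ≤ 10 → IsIntervalGraph (G.induce X))
    (hm : 11 ≤ m) (hinj : Function.Injective f)
    (hADJ : ∀ i j, G.Adj (f i) (f j) ↔ (j = i + 1 ∨ i = j + 1))
    (x : V) (hxf : ∀ k, x ≠ f k)
    (i : ZMod m) (hAi : G.Adj x (f i)) (hA1 : ¬ G.Adj x (f (i + 1)))
    (j : ℕ) (hj2 : 2 ≤ j) (hj8 : j ≤ 8) : ¬ G.Adj x (f (i + (j : ZMod m))) := by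
  haveI : NeZero m := ⟨by omega⟩
  classical
  intro hAj
  have hQj : G.Adj x (f (i + 1 + ((j - 1 : ℕ) : ZMod m))) := by
    have hc : ((j : ℕ) : ZMod m) = ((j - 1 : ℕ) : ZMod m) + 1 := by
      rw [← Nat.cast_add_one]; congr 1; omega
    have he : i + (j : ZMod m) = i + 1 + ((j - 1 : ℕ) : ZMod m) := by rw [hc]; ring
    rwa [he] at hAj
  have hex : ∃ l : ℕ, G.Adj x (f (i + 1 + (l : ZMod m))) := ⟨j - 1, hQj⟩
  set l₀ := Nat.find hex with hl₀def
  have hl₀ : G.Adj x (f (i + 1 + (l₀ : ZMod m))) := Nat.find_spec hex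
  have hmin : ∀ k, k < l₀ → ¬ G.Adj x (f (i + 1 + (k : ZMod m))) :=
    fun k hk => Nat.find_min hex hk
  have hl₀le : l₀ ≤ j - 1 := Nat.find_le hQj
  have hl₀1 : 1 ≤ l₀ := by
    rcases Nat.eq_zero_or_pos l₀ with h0 | h
    · exfalso; apply hA1; have := hl₀; rw [h0] at this; simpa using this
    · exact h
  set n := l₀ + 3 with hndef
  set X : Set V := insert x ((fun t : ℕ => f (i + (t : ZMod m))) '' Set.Iic (l₀ + 1))
    with hXdef
  have hcard : X.ncard ≤ 10 := by
    calc X.ncard ≤ ((fun t : ℕ => f (i + (t : ZMod m))) '' Set.Iic (l₀ + 1)).ncard + 1 :=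
          Set.ncard_insert_le _ _
      _ ≤ (Set.Iic (l₀ + 1)).ncard + 1 := by
          have := Set.ncard_image_le (s := Set.Iic (l₀ + 1))
            (f := fun t : ℕ => f (i + (t : ZMod m))) (Set.finite_Iic _)
          omega
      _ = (l₀ + 2) + 1 := by
          rw [← Finset.coe_Iic, Set.ncard_coe_finset, Nat.card_Iic]
      _ ≤ 10 := by omega
  set p : ℕ → V := fun k => if k = 0 then x else f (i + ((k - 1 : ℕ) : ZMod m)) with hpdef
  refine cyc_not_interval (hSmall X hcard) n (by omega) p ?_ ?_ ?_ ?_ ?_ ?_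
  · intro k hk
    by_cases h0 : k = 0
    · simp [hpdef, h0, hXdef]
    · simp only [hpdef, if_neg h0]
      exact Set.mem_insert_iff.mpr (Or.inr ⟨k - 1, Set.mem_Iic.mpr (by omega), rfl⟩)
  · intro k hk
    by_cases h0 : k = 0
    · subst h0
      simp only [hpdef, if_pos rfl, if_neg (Nat.one_ne_zero)]
      simpa using hAi
    · have h1 : k + 1 ≠ 0 := by omega
      simp only [hpdef, if_neg h0, if_neg h1]
      have : ((k + 1 - 1 : ℕ) : ZMod m) = ((k - 1 : ℕ) : ZMod m) + 1 := by
        rw [show k + 1 - 1 = (k - 1) + 1 by omega]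
        push_cast
        ring
      rw [this, ← add_assoc]
      exact hole_succ hADJ _
  · have hn1 : n - 1 ≠ 0 := by omega
    simp only [hpdef, if_neg hn1, if_pos rfl]
    rw [show n - 1 - 1 = l₀ + 1 from by omega]
    have he : i + ((l₀ + 1 : ℕ) : ZMod m) = i + 1 + (l₀ : ZMod m) := by push_cast; ring
    rw [he]
    exact hl₀.symm
  · intro k hk
    by_cases h0 : k = 0
    · subst h0
      simp only [hpdef, if_pos rfl, if_neg (by omega : (2:ℕ) ≠ 0)]
      have : ((2 - 1 : ℕ) : ZMod m) = 1 := by norm_num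
      rw [this]
      exact ⟨hA1, hxf _⟩
    · have h2 : k + 2 ≠ 0 := by omega
      simp only [hpdef, if_neg h0, if_neg h2]
      have h := hole_nonadj (by omega) hinj hADJ i (k - 1) (k + 2 - 1) (by omega) (by omega)
      exact ⟨h.1, h.2⟩
  · have hn2 : n - 2 ≠ 0 := by omega
    simp only [hpdef, if_neg hn2, if_pos rfl]
    rw [show n - 2 - 1 = l₀ from by omega]
    have hc : ((l₀ : ℕ) : ZMod m) = ((l₀ - 1 : ℕ) : ZMod m) + 1 := by
      rw [← Nat.cast_add_one]; congr 1; omega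
    have he2 : i + (l₀ : ZMod m) = i + 1 + ((l₀ - 1 : ℕ) : ZMod m) := by rw [hc]; ring
    rw [he2]
    have hna := hmin (l₀ - 1) (by omega)
    exact ⟨fun h => hna h.symm, fun h => (hxf _) h.symm⟩
  · have hn1 : n - 1 ≠ 0 := by omega
    simp only [hpdef, if_neg hn1, if_neg (Nat.one_ne_zero)]
    rw [show n - 1 - 1 = l₀ + 1 from by omega, show (1:ℕ) - 1 = 0 from rfl]
    have h := hole_nonadj (by omega) hinj hADJ i 0 (l₀ + 1) (by omega) (by omega)
    exact ⟨fun hh => h.1 hh.symm, fun hh => h.2 hh.symm⟩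

/-- Backward gap lemma. -/
lemma hole_gap' (hSmall : ∀ X : Set V, X.ncard ≤ 10 → IsIntervalGraph (G.induce X))
    (hm : 11 ≤ m) (hinj : Function.Injective f)
    (hADJ : ∀ i j, G.Adj (f i) (f j) ↔ (j = i + 1 ∨ i = j + 1))
    (x : V) (hxf : ∀ k, x ≠ f k)
    (i : ZMod m) (hAi : G.Adj x (f i)) (hA1 : ¬ G.Adj x (f (i - 1)))
    (j : ℕ) (hj2 : 2 ≤ j) (hj8 : j ≤ 8) : ¬ G.Adj x (f (i - (j : ZMod m))) := by
  haveI : NeZero m := ⟨by omega⟩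
  set fr : ZMod m → V := fun k => f (-k) with hfrdef
  have hinj' : Function.Injective fr := fun a b h => neg_injective (hinj h)
  have hADJ' : ∀ a b, G.Adj (fr a) (fr b) ↔ (b = a + 1 ∨ a = b + 1) := by
    intro a b
    rw [hfrdef]
    simp only
    rw [hADJ]
    constructor
    · rintro (h | h)
      · exact Or.inr (by linear_combination h)
      · exact Or.inl (by linear_combination h)
    · rintro (h | h)
      · exact Or.inr (by linear_combination h)
      · exact Or.inl (by linear_combination h)
  have hxf' : ∀ k, x ≠ fr k := fun k => hxf _
  have h1 : fr (-i) = f i := by rw [hfrdef]; simp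
  have h2 : fr (-i + 1) = f (i - 1) := by
    rw [hfrdef]; simp only; congr 1; ring
  have := hole_gap hSmall hm hinj' hADJ' x hxf' (-i) (by rwa [h1]) (by rwa [h2]) j hj2 hj8
  have h3 : fr (-i + (j : ZMod m)) = f (i - (j : ZMod m)) := by
    rw [hfrdef]; simp only; congr 1; ring
  rwa [h3] at this

end Holes

/-! ### Small fixed obstructions: C4, C5, ncard helpers -/

section Fixed

variable {V : Type*} {G : SimpleGraph V}

lemma ncard4_le (a b c d : V) : ({a, b, c, d} : Set V).ncard ≤ 4 := by
  have h1 := Set.ncard_insert_le a ({b, c, d} : Set V)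
  have h2 := Set.ncard_insert_le b ({c, d} : Set V)
  have h3 := Set.ncard_insert_le c ({d} : Set V)
  have h4 : ({d} : Set V).ncard = 1 := Set.ncard_singleton d
  omega

lemma ncard5_le (a b c d e : V) : ({a, b, c, d, e} : Set V).ncard ≤ 5 := by
  have h1 := Set.ncard_insert_le a ({b, c, d, e} : Set V)
  have h2 := ncard4_le b c d e
  omega

lemma ncard6_le (a b c d e f : V) : ({a, b, c, d, e, f} : Set V).ncard ≤ 6 := by
  have h1 := Set.ncard_insert_le a ({b, c, d, e, f} : Set V)
  have h2 := ncard5_le b c d e f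
  omega

lemma ncard7_le (a b c d e f g : V) : ({a, b, c, d, e, f, g} : Set V).ncard ≤ 7 := by
  have h1 := Set.ncard_insert_le a ({b, c, d, e, f, g} : Set V)
  have h2 := ncard6_le b c d e f g
  omega

/-- No induced `C₄`. -/
lemma c4_contra (hSmall : ∀ X : Set V, X.ncard ≤ 10 → IsIntervalGraph (G.induce X))
    (a b c d : V)
    (e1 : G.Adj a b) (e2 : G.Adj b c) (e3 : G.Adj c d) (e4 : G.Adj d a)
    (d1 : ¬ G.Adj a c ∧ a ≠ c) (d2 : ¬ G.Adj b d ∧ b ≠ d) : False := by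
  classical
  set X : Set V := {a, b, c, d} with hX
  have hcard : X.ncard ≤ 10 := le_trans (ncard4_le a b c d) (by omega)
  set p : ℕ → V := fun k => if k = 0 then a else if k = 1 then b else if k = 2 then c else d
    with hp
  refine cyc_not_interval (hSmall X hcard) 4 (by omega) p ?_ ?_ ?_ ?_ ?_ ?_
  · intro k hk
    have hk' : k ≤ 3 := by omega
    interval_cases k <;> simp [hp, hX]
  · intro k hk
    have hk' : k ≤ 2 := by omega
    interval_cases k
    · simpa [hp] using e1
    · simpa [hp] using e2
    · simpa [hp] using e3
  · simpa [hp] using e4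
  · intro k hk
    have hk' : k ≤ 1 := by omega
    interval_cases k
    · simpa [hp] using d1
    · simpa [hp] using d2
  · simpa [hp] using ⟨fun h => d1.1 h.symm, fun h => d1.2 h.symm⟩
  · simpa [hp] using ⟨fun h => d2.1 h.symm, fun h => d2.2 h.symm⟩

/-- No induced `C₅`. -/
lemma c5_contra (hSmall : ∀ X : Set V, X.ncard ≤ 10 → IsIntervalGraph (G.induce X))
    (a b c d e : V)
    (e1 : G.Adj a b) (e2 : G.Adj b c) (e3 : G.Adj c d) (e4 : G.Adj d e) (e5 : G.Adj e a)
    (d02 : ¬ G.Adj a c ∧ a ≠ c) (d13 : ¬ G.Adj b d ∧ b ≠ d) (d24 : ¬ G.Adj c e ∧ c ≠ e)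
    (d30 : ¬ G.Adj d a ∧ d ≠ a) (d41 : ¬ G.Adj e b ∧ e ≠ b) : False := by
  classical
  set X : Set V := {a, b, c, d, e} with hX
  have hcard : X.ncard ≤ 10 := le_trans (ncard5_le a b c d e) (by omega)
  set p : ℕ → V := fun k => if k = 0 then a else if k = 1 then b else if k = 2 then c
    else if k = 3 then d else e with hp
  refine cyc_not_interval (hSmall X hcard) 5 (by omega) p ?_ ?_ ?_ ?_ ?_ ?_
  · intro k hk
    have hk' : k ≤ 4 := by omega
    interval_cases k <;> simp [hp, hX]
  · intro k hk
    have hk' : k ≤ 3 := by omega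
    interval_cases k
    · simpa [hp] using e1
    · simpa [hp] using e2
    · simpa [hp] using e3
    · simpa [hp] using e4
  · simpa [hp] using e5
  · intro k hk
    have hk' : k ≤ 2 := by omega
    interval_cases k
    · simpa [hp] using d02
    · simpa [hp] using d13
    · simpa [hp] using d24
  · simpa [hp] using d30
  · simpa [hp] using d41

end Fixed

/-! ### The boundary lemma -/

section Bound

variable {V : Type*} {G : SimpleGraph V} {m : ℕ} {f : ZMod m → V}

lemma hole_nonadj₂ (hm4 : 4 ≤ m) (hinj : Function.Injective f)
    (hADJ : ∀ i j, G.Adj (f i) (f j) ↔ (j = i + 1 ∨ i = j + 1))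
    (i j : ZMod m) (d : ℕ) (hd : j = i + (d : ZMod m)) (h1 : 2 ≤ d) (h2 : d + 2 ≤ m) :
    ¬ G.Adj (f i) (f j) ∧ f i ≠ f j := by
  subst hd
  have h := hole_nonadj hm4 hinj hADJ i 0 d (by omega) (by omega)
  simpa using h

/-- Boundary lemma: suppose `x` is adjacent to some vertex of the hole, `u` is a
neighbour of `x` with no neighbour on the hole (and not on the hole), and `z` is a
neighbour of `u` distinct from and nonadjacent to `x`.  Then `x` is adjacent to every
vertex of the hole. -/
lemma bound (hSmall : ∀ X : Set V, X.ncard ≤ 10 → IsIntervalGraph (G.induce X))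
    (hm4 : 4 ≤ m) (hinj : Function.Injective f)
    (hADJ : ∀ i j, G.Adj (f i) (f j) ↔ (j = i + 1 ∨ i = j + 1))
    {x u z : V} (hxu : G.Adj x u) (huz : G.Adj u z)
    (hu : ∀ k, ¬ G.Adj u (f k) ∧ u ≠ f k)
    (hzx : ¬ G.Adj z x) (hzxne : z ≠ x)
    (hxA : ∃ k, G.Adj x (f k)) :
    ∀ k, G.Adj x (f k) := by
  classical
  haveI : NeZero m := ⟨by omega⟩
  by_contra hnot
  push_neg at hnot
  obtain ⟨k₀, hk₀⟩ := hnot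
  have hm : 11 ≤ m := hole_ge_11 hSmall hm4 hinj hADJ
  have hxf : ∀ k, x ≠ f k := by
    intro k he
    exact (hu k).1 (he ▸ hxu).symm
  have hzf : ∀ k, z ≠ f k := fun k he => (hu k).1 (he ▸ huz)
  obtain ⟨ka, hka⟩ := hxA
  -- find the start of an arc of x-neighbours
  have hfind1 : ∃ jj : ℕ, G.Adj x (f (k₀ + 1 + (jj : ZMod m))) := by
    refine ⟨(ka - k₀ - 1).val, ?_⟩
    have he : k₀ + 1 + (((ka - k₀ - 1).val : ℕ) : ZMod m) = ka := by
      rw [ZMod.natCast_rightInverse (ka - k₀ - 1)]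
      ring
    rw [he]
    exact hka
  set j₀ := Nat.find hfind1 with hj₀def
  set istar : ZMod m := k₀ + 1 + (j₀ : ZMod m) with histar
  have hAistar : G.Adj x (f istar) := Nat.find_spec hfind1
  have hAprev : ¬ G.Adj x (f (istar - 1)) := by
    rcases Nat.eq_zero_or_pos j₀ with h0 | hpos
    · have he : istar - 1 = k₀ := by rw [histar, h0]; push_cast; ring
      rw [he]; exact hk₀
    · have hlt := Nat.find_min hfind1 (show j₀ - 1 < j₀ by omega)
      have he : istar - 1 = k₀ + 1 + ((j₀ - 1 : ℕ) : ZMod m) := by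
        rw [histar]
        have hc : ((j₀ : ℕ) : ZMod m) = ((j₀ - 1 : ℕ) : ZMod m) + 1 := by
          rw [← Nat.cast_add_one]; congr 1 <;> omega
        rw [hc]; ring
      rw [he]; exact hlt
  -- find the end of this arc
  have hne0 : istar ≠ k₀ := by
    intro he
    rw [he] at hAistar
    exact hk₀ hAistar
  have hfind2 : ∃ t : ℕ, ¬ G.Adj x (f (istar + ((t + 1 : ℕ) : ZMod m))) := by
    refine ⟨(k₀ - istar).val - 1, ?_⟩
    have hvpos : 1 ≤ (k₀ - istar).val := by
      rcases Nat.eq_zero_or_pos (k₀ - istar).val with h0 | h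
      · exfalso
        have hc := ZMod.natCast_rightInverse (k₀ - istar)
        rw [h0] at hc
        simp only [Nat.cast_zero] at hc
        have : k₀ = istar := by
          have := hc.symm
          rwa [sub_eq_zero] at this
        exact hne0 this.symm
      · exact h
    have he : istar + (((k₀ - istar).val - 1 + 1 : ℕ) : ZMod m) = k₀ := by
      rw [show (k₀ - istar).val - 1 + 1 = (k₀ - istar).val from by omega]
      rw [ZMod.natCast_rightInverse (k₀ - istar)]
      ring
    rw [he]
    exact hk₀
  set t₀ := Nat.find hfind2 with ht₀def
  set s₀ := t₀ + 1 with hs₀def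
  have hAs : ¬ G.Adj x (f (istar + ((s₀ : ℕ) : ZMod m))) := Nat.find_spec hfind2
  have harc : ∀ t : ℕ, t < s₀ → G.Adj x (f (istar + (t : ZMod m))) := by
    intro t ht
    rcases Nat.eq_zero_or_pos t with h0 | hp
    · rw [h0]; simpa using hAistar
    · by_contra hna
      have hmin := Nat.find_min hfind2 (show t - 1 < t₀ by omega)
      apply hmin
      rw [show t - 1 + 1 = t from by omega]
      exact hna
  have hs₀1 : 1 ≤ s₀ := by omega
  -- s₀ ≤ m - 1
  have hvlt : (k₀ - istar).val < m := ZMod.val_lt _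
  have hvpos : 1 ≤ (k₀ - istar).val := by
    rcases Nat.eq_zero_or_pos (k₀ - istar).val with h0 | h
    · exfalso
      have hc := ZMod.natCast_rightInverse (k₀ - istar)
      rw [h0] at hc
      simp only [Nat.cast_zero] at hc
      have : k₀ = istar := by
        have := hc.symm
        rwa [sub_eq_zero] at this
      exact hne0 this.symm
    · exact h
  have ht₀le : t₀ ≤ (k₀ - istar).val - 1 := by
    apply Nat.find_le
    have he : istar + (((k₀ - istar).val - 1 + 1 : ℕ) : ZMod m) = k₀ := by
      rw [show (k₀ - istar).val - 1 + 1 = (k₀ - istar).val from by omega]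
      rw [ZMod.natCast_rightInverse (k₀ - istar)]
      ring
    rw [he]
    exact hk₀
  have hs₀m : s₀ ≤ m - 1 := by omega
  -- the vertex b = end of the arc
  set b : ZMod m := istar + ((s₀ - 1 : ℕ) : ZMod m) with hbdef
  have hAb : G.Adj x (f b) := harc (s₀ - 1) (by omega)
  have hb1 : b + 1 = istar + ((s₀ : ℕ) : ZMod m) := by
    rw [hbdef]
    have hc : ((s₀ : ℕ) : ZMod m) = ((s₀ - 1 : ℕ) : ZMod m) + 1 := by
      rw [← Nat.cast_add_one]; congr 1 <;> omega
    rw [hc]; ring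
  have hAb1 : ¬ G.Adj x (f (b + 1)) := by rw [hb1]; exact hAs
  -- the gap is long: m ≥ s₀ + 8
  have hm8 : s₀ + 8 ≤ m := by
    by_contra hcon
    push_neg at hcon
    have hj2 : 2 ≤ m - s₀ + 1 := by omega
    have hj8 : m - s₀ + 1 ≤ 8 := by omega
    have hgap := hole_gap hSmall hm hinj hADJ x hxf b hAb hAb1 (m - s₀ + 1) hj2 hj8
    have he : b + ((m - s₀ + 1 : ℕ) : ZMod m) = istar := by
      rw [hbdef, add_assoc, ← Nat.cast_add,
        show (s₀ - 1) + (m - s₀ + 1) = m from by omega, ZMod.natCast_self, add_zero]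
    rw [he] at hgap
    exact hgap hAistar
  -- case analysis on the arc length s₀
  rcases Nat.lt_or_ge s₀ 3 with hs3 | hs3
  · rcases Nat.lt_or_ge s₀ 2 with hs2 | hs2
    · -- s₀ = 1 : long claw centred at f istar
      have hs1 : s₀ = 1 := by omega
      have hA1 : ¬ G.Adj x (f (istar + 1)) := by
        have := hAs
        rw [hs1] at this
        simpa using this
      have hA2 : ¬ G.Adj x (f (istar + 2)) := by
        have h := hole_gap hSmall hm hinj hADJ x hxf istar hAistar hA1 2 (by omega) (by omega)
        simpa using h
      have hAm2 : ¬ G.Adj x (f (istar - 2)) := by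
        have h := hole_gap' hSmall hm hinj hADJ x hxf istar hAistar hAprev 2 (by omega) (by omega)
        simpa using h
      set X : Set V := {f istar, f (istar - 1), f (istar - 2), f (istar + 1), f (istar + 2), x, u}
        with hX
      have hcard : X.ncard ≤ 10 := le_trans (ncard7_le _ _ _ _ _ _ _) (by omega)
      refine spider_not_interval (hSmall X hcard)
        (f istar) (f (istar - 1)) (f (istar - 2)) (f (istar + 1)) (f (istar + 2)) x u
        (by simp [hX]) (by simp [hX]) (by simp [hX]) (by simp [hX]) (by simp [hX])
        (by simp [hX]) (by simp [hX])
        ?_ ?_ ?_ ?_ ?_ ?_ ?_ ?_ ?_ ?_ ?_ ?_ ?_ ?_ ?_ ?_ ?_ ?_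
      · have h := hole_succ hADJ (istar - 1)
        rw [show istar - 1 + 1 = istar from by ring] at h
        exact h.symm
      · exact hole_succ hADJ istar
      · exact hAistar.symm
      · have h := hole_succ hADJ (istar - 2)
        rw [show istar - 2 + 1 = istar - 1 from by ring] at h
        exact h.symm
      · have h := hole_succ hADJ (istar + 1)
        rw [show istar + 1 + 1 = istar + 2 from by ring] at h
        exact h
      · exact hxu
      · -- f istar vs f (istar - 2)
        have h := hole_nonadj₂ hm4 hinj hADJ (istar - 2) istar 2
          (by push_cast; ring) (by omega) (by omega)
        exact ⟨fun hh => h.1 hh.symm, fun hh => h.2 hh.symm⟩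
      · -- f istar vs f (istar + 2)
        exact hole_nonadj₂ hm4 hinj hADJ istar (istar + 2) 2 (by push_cast; ring)
          (by omega) (by omega)
      · -- f istar vs u
        exact ⟨fun hh => (hu istar).1 hh.symm, fun hh => (hu istar).2 hh.symm⟩
      · -- f (istar - 1) vs f (istar + 2)
        exact hole_nonadj₂ hm4 hinj hADJ (istar - 1) (istar + 2) 3 (by push_cast; ring)
          (by omega) (by omega)
      · -- f (istar - 1) vs u
        exact ⟨fun hh => (hu _).1 hh.symm, fun hh => (hu _).2 hh.symm⟩
      · -- f (istar + 1) vs f (istar - 2)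
        have h := hole_nonadj₂ hm4 hinj hADJ (istar - 2) (istar + 1) 3
          (by push_cast; ring) (by omega) (by omega)
        exact ⟨fun hh => h.1 hh.symm, fun hh => h.2 hh.symm⟩
      · -- f (istar + 1) vs u
        exact ⟨fun hh => (hu _).1 hh.symm, fun hh => (hu _).2 hh.symm⟩
      · -- x vs f (istar - 2)
        exact ⟨hAm2, hxf _⟩
      · -- x vs f (istar + 2)
        exact ⟨hA2, hxf _⟩
      · -- f (istar - 2) vs f (istar + 2)
        exact hole_nonadj₂ hm4 hinj hADJ (istar - 2) (istar + 2) 4 (by push_cast; ring)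
          (by omega) (by omega)
      · -- f (istar - 2) vs u
        exact ⟨fun hh => (hu _).1 hh.symm, fun hh => (hu _).2 hh.symm⟩
      · -- f (istar + 2) vs u
        exact ⟨fun hh => (hu _).1 hh.symm, fun hh => (hu _).2 hh.symm⟩
    · -- s₀ = 2 : net
      have hs2' : s₀ = 2 := by omega
      have hAi1 : G.Adj x (f (istar + 1)) := by
        have h := harc 1 (by omega)
        simpa using h
      have hA2 : ¬ G.Adj x (f (istar + 2)) := by
        have := hAs
        rw [hs2'] at this
        have he : istar + ((2 : ℕ) : ZMod m) = istar + 2 := by push_cast; ring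
        rwa [he] at this
      set X : Set V := {x, f istar, f (istar + 1), u, f (istar - 1), f (istar + 2)} with hX
      have hcard : X.ncard ≤ 10 := le_trans (ncard6_le _ _ _ _ _ _) (by omega)
      refine net_not_interval (hSmall X hcard) x (f istar) (f (istar + 1)) u
        (f (istar - 1)) (f (istar + 2))
        (by simp [hX]) (by simp [hX]) (by simp [hX]) (by simp [hX]) (by simp [hX])
        (by simp [hX])
        hAistar hAi1 (hole_succ hADJ istar) hxu
        ?_ ?_ ?_ ?_ ?_ ?_ ?_ ?_ ?_ ?_ ?_
      · -- f istar adj f (istar - 1)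
        have h := hole_succ hADJ (istar - 1)
        rw [show istar - 1 + 1 = istar from by ring] at h
        exact h.symm
      · -- f (istar + 1) adj f (istar + 2)
        have h := hole_succ hADJ (istar + 1)
        rw [show istar + 1 + 1 = istar + 2 from by ring] at h
        exact h
      · exact ⟨(hu istar).1, (hu istar).2⟩
      · exact ⟨(hu _).1, (hu _).2⟩
      · exact ⟨(hu _).1, (hu _).2⟩
      · exact ⟨(hu _).1, (hu _).2⟩
      · -- f (istar - 1) vs x
        exact ⟨fun hh => hAprev hh.symm, fun hh => (hxf _) hh.symm⟩
      · -- f (istar - 1) vs f (istar + 1)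
        exact hole_nonadj₂ hm4 hinj hADJ (istar - 1) (istar + 1) 2 (by push_cast; ring)
          (by omega) (by omega)
      · -- f (istar - 1) vs f (istar + 2)
        exact hole_nonadj₂ hm4 hinj hADJ (istar - 1) (istar + 2) 3 (by push_cast; ring)
          (by omega) (by omega)
      · -- f (istar + 2) vs x
        exact ⟨fun hh => hA2 hh.symm, fun hh => (hxf _) hh.symm⟩
      · -- f (istar + 2) vs f istar
        have h := hole_nonadj₂ hm4 hinj hADJ istar (istar + 2) 2 (by push_cast; ring)
          (by omega) (by omega)
        exact ⟨fun hh => h.1 hh.symm, fun hh => h.2 hh.symm⟩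
  · -- s₀ ≥ 3 : long claw centred at x (after analysing z)
    have hBfacts : (¬ G.Adj z (f istar)) ∧ (¬ G.Adj z (f (istar - 1))) ∧
        (¬ G.Adj z (f b)) ∧ (¬ G.Adj z (f (b + 1))) := by
      by_cases hC0 : ∃ k, G.Adj x (f k) ∧ G.Adj z (f k)
      · exfalso
        obtain ⟨k, hxk, hzk⟩ := hC0
        exact c4_contra hSmall x (f k) z u hxk hzk.symm huz.symm hxu.symm
          ⟨fun h => hzx h.symm, fun h => hzxne h.symm⟩
          ⟨fun h => (hu k).1 h.symm, fun h => (hu k).2 h.symm⟩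
      · by_cases hC1 : ∃ k, G.Adj x (f k) ∧ G.Adj z (f (k + 1))
        · exfalso
          obtain ⟨k, hxk, hzk1⟩ := hC1
          exact c5_contra hSmall x (f k) (f (k + 1)) z u hxk (hole_succ hADJ k)
            hzk1.symm huz.symm hxu.symm
            ⟨fun h => hC0 ⟨k + 1, h, hzk1⟩, hxf _⟩
            ⟨fun h => hC0 ⟨k, hxk, h.symm⟩, fun h => (hzf k) h.symm⟩
            ⟨fun h => (hu _).1 h.symm, fun h => (hu _).2 h.symm⟩
            ⟨hzx, hzxne⟩
            ⟨(hu k).1, (hu k).2⟩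
        · by_cases hC1' : ∃ k, G.Adj x (f k) ∧ G.Adj z (f (k - 1))
          · exfalso
            obtain ⟨k, hxk, hzk1⟩ := hC1'
            have hsucc : G.Adj (f k) (f (k - 1)) := by
              have h := hole_succ hADJ (k - 1)
              rw [show k - 1 + 1 = k from by ring] at h
              exact h.symm
            exact c5_contra hSmall x (f k) (f (k - 1)) z u hxk hsucc
              hzk1.symm huz.symm hxu.symm
              ⟨fun h => hC0 ⟨k - 1, h, hzk1⟩, hxf _⟩
              ⟨fun h => hC0 ⟨k, hxk, h.symm⟩, fun h => (hzf k) h.symm⟩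
              ⟨fun h => (hu _).1 h.symm, fun h => (hu _).2 h.symm⟩
              ⟨hzx, hzxne⟩
              ⟨(hu k).1, (hu k).2⟩
          · push_neg at hC0 hC1 hC1'
            exact ⟨hC0 istar hAistar, hC1' istar hAistar, hC0 b hAb, hC1 b hAb⟩
    set X : Set V := {x, f istar, f (istar - 1), f b, f (b + 1), u, z} with hX
    have hcard : X.ncard ≤ 10 := le_trans (ncard7_le _ _ _ _ _ _ _) (by omega)
    have hsucc1 : G.Adj (f istar) (f (istar - 1)) := by
      have h := hole_succ hADJ (istar - 1)
      rw [show istar - 1 + 1 = istar from by ring] at h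
      exact h.symm
    refine spider_not_interval (hSmall X hcard)
      x (f istar) (f (istar - 1)) (f b) (f (b + 1)) u z
      (by simp [hX]) (by simp [hX]) (by simp [hX]) (by simp [hX]) (by simp [hX])
      (by simp [hX]) (by simp [hX])
      hAistar hAb hxu hsucc1 (hole_succ hADJ b) huz
      ?_ ?_ ?_ ?_ ?_ ?_ ?_ ?_ ?_ ?_ ?_ ?_
    · exact ⟨hAprev, hxf _⟩
    · exact ⟨hAb1, hxf _⟩
    · exact ⟨fun h => hzx h.symm, fun h => hzxne h.symm⟩
    · -- f istar vs f (b+1)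
      exact hole_nonadj₂ hm4 hinj hADJ istar (b + 1) s₀ hb1 (by omega) (by omega)
    · -- f istar vs z
      exact ⟨fun h => hBfacts.1 h.symm, fun h => (hzf _) h.symm⟩
    · -- f b vs f (istar - 1)
      have hd : b = (istar - 1) + ((s₀ : ℕ) : ZMod m) := by
        rw [hbdef]
        have hc : ((s₀ : ℕ) : ZMod m) = ((s₀ - 1 : ℕ) : ZMod m) + 1 := by
          rw [← Nat.cast_add_one]; congr 1 <;> omega
        rw [hc]; ring
      have h := hole_nonadj₂ hm4 hinj hADJ (istar - 1) b s₀ hd (by omega) (by omega)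
      exact ⟨fun hh => h.1 hh.symm, fun hh => h.2 hh.symm⟩
    · -- f b vs z
      exact ⟨fun h => hBfacts.2.2.1 h.symm, fun h => (hzf _) h.symm⟩
    · -- u vs f (istar - 1)
      exact ⟨(hu _).1, (hu _).2⟩
    · -- u vs f (b+1)
      exact ⟨(hu _).1, (hu _).2⟩
    · -- f (istar - 1) vs f (b+1)
      have hd : b + 1 = (istar - 1) + ((s₀ + 1 : ℕ) : ZMod m) := by
        rw [hb1]
        push_cast
        ring
      exact hole_nonadj₂ hm4 hinj hADJ (istar - 1) (b + 1) (s₀ + 1) hd (by omega) (by omega)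
    · -- f (istar - 1) vs z
      exact ⟨fun h => hBfacts.2.1 h.symm, fun h => (hzf _) h.symm⟩
    · -- f (b+1) vs z
      exact ⟨fun h => hBfacts.2.2.2 h.symm, fun h => (hzf _) h.symm⟩

end Bound

/-! ### The sandwich application and the main theorem -/

section Final

variable {V : Type*} {G : SimpleGraph V}

lemma mem_cns (G : SimpleGraph V) (U : Set V) (x : V) :
    x ∈ closedNbhdSet G U ↔ ∃ v ∈ U, x = v ∨ G.Adj v x := by
  simp only [closedNbhdSet, closedNbhd, Set.mem_iUnion, Set.mem_insert_iff,
    SimpleGraph.mem_neighborSet, exists_prop]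

/-- If `y` is a common neighbour of a hole and `w ≠ y` is adjacent to some hole vertex,
then `w` is adjacent to `y`. -/
lemma sandwich {m : ℕ} {f : ZMod m → V}
    (hSmall : ∀ X : Set V, X.ncard ≤ 10 → IsIntervalGraph (G.induce X))
    (hm4 : 4 ≤ m) (hinj : Function.Injective f)
    (hADJ : ∀ i j, G.Adj (f i) (f j) ↔ (j = i + 1 ∨ i = j + 1))
    (y w : V) (hyc : ∀ k, G.Adj y (f k)) (q : ZMod m) (hwq : G.Adj w (f q))
    (hwy : ¬ G.Adj w y) (hwyne : w ≠ y) : False := by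
  classical
  haveI : NeZero m := ⟨by omega⟩
  have hm : 11 ≤ m := hole_ge_11 hSmall hm4 hinj hADJ
  have hyf : ∀ k, y ≠ f k := by
    intro k he
    have := hyc k
    rw [he] at this
    exact G.loopless.irrefl _ this
  have hwf : ∀ k, w ≠ f k := by
    intro k he
    exact hwy (by rw [he]; exact (hyc k).symm)
  set X : Set V := {f (q - 2), f (q - 1), f q, f (q + 1), f (q + 2), y, w} with hX
  have hcard : X.ncard ≤ 10 := le_trans (ncard7_le _ _ _ _ _ _ _) (by omega)
  have e12 : G.Adj (f (q - 2)) (f (q - 1)) := by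
    have h := hole_succ hADJ (q - 2)
    rwa [show q - 2 + 1 = q - 1 from by ring] at h
  have e23 : G.Adj (f (q - 1)) (f q) := by
    have h := hole_succ hADJ (q - 1)
    rwa [show q - 1 + 1 = q from by ring] at h
  have e45 : G.Adj (f (q + 1)) (f (q + 2)) := by
    have h := hole_succ hADJ (q + 1)
    rwa [show q + 1 + 1 = q + 2 from by ring] at h
  exact sandwich_not_interval (hSmall X hcard)
    (f (q - 2)) (f (q - 1)) (f q) (f (q + 1)) (f (q + 2)) y w
    (by simp [hX]) (by simp [hX]) (by simp [hX]) (by simp [hX]) (by simp [hX])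
    (by simp [hX]) (by simp [hX])
    e12 e23 (hole_succ hADJ q) e45 (hyc _) (hyc _) hwq
    (hole_nonadj₂ hm4 hinj hADJ (q - 2) q 2 (by push_cast; ring) (by omega) (by omega))
    (hole_nonadj₂ hm4 hinj hADJ q (q + 2) 2 (by push_cast; ring) (by omega) (by omega))
    (hole_nonadj₂ hm4 hinj hADJ (q - 2) (q + 2) 4 (by push_cast; ring) (by omega) (by omega))
    (hole_nonadj₂ hm4 hinj hADJ (q - 1) (q + 2) 3 (by push_cast; ring) (by omega) (by omega))
    (hole_nonadj₂ hm4 hinj hADJ (q - 2) (q + 1) 3 (by push_cast; ring) (by omega) (by omega))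
    ⟨hwy, hwyne⟩

end Final

end Stmt13

/-- If two holes of a prereduced graph are adjacent but not congenial,
then every neighbor of one hole on the other is a common neighbor; in particular the
holes are disjoint. -/
theorem stmt_13 {V : Type*} [Fintype V] (G : SimpleGraph V) (hG : Prereduced G)
    (H₁ H₂ : Set V) (h1 : IsHole G H₁) (h2 : IsHole G H₂)
    (hadj : (H₁ ∩ closedNbhdSet G H₂).Nonempty)
    (hnsub : ¬ H₁ ⊆ closedNbhdSet G H₂) :
    H₁ ∩ closedNbhdSet G H₂ ⊆ commonNbrs G H₂ ∧ Disjoint H₁ H₂ := by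
  classical
  obtain ⟨m₁, hm₁4, f₁, hinj₁, hrange₁, hADJ₁⟩ := h1
  obtain ⟨m₂, hm₂4, f₂, hinj₂, hrange₂, hADJ₂⟩ := h2
  have hSmall := Stmt13.small_interval hG
  haveI : NeZero m₁ := ⟨by omega⟩
  -- auxiliary facts about N[H₂]
  have hNfacts : ∀ w : V, w ∉ closedNbhdSet G H₂ →
      ∀ k, ¬ G.Adj w (f₂ k) ∧ w ≠ f₂ k := by
    intro w hw k
    constructor
    · intro h
      exact hw ((Stmt13.mem_cns G H₂ w).mpr
        ⟨f₂ k, by rw [← hrange₂]; exact ⟨k, rfl⟩, Or.inr h.symm⟩)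
    · intro h
      exact hw ((Stmt13.mem_cns G H₂ w).mpr
        ⟨f₂ k, by rw [← hrange₂]; exact ⟨k, rfl⟩, Or.inl h⟩)
  have hNof : ∀ w : V, w ∈ closedNbhdSet G H₂ →
      (∃ k, w = f₂ k) ∨ (∃ k, G.Adj w (f₂ k)) := by
    intro w hw
    rw [Stmt13.mem_cns] at hw
    obtain ⟨v, hv, hcase⟩ := hw
    rw [← hrange₂] at hv
    obtain ⟨k, rfl⟩ := hv
    rcases hcase with h | h
    · exact Or.inl ⟨k, h⟩
    · exact Or.inr ⟨k, h.symm⟩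
  have hAof : ∀ w : V, w ∈ closedNbhdSet G H₂ → ∃ k, G.Adj w (f₂ k) := by
    intro w hw
    rcases hNof w hw with ⟨k, hk⟩ | h
    · exact ⟨k + 1, by rw [hk]; exact Stmt13.hole_succ hADJ₂ k⟩
    · exact h
  -- find a boundary vertex of H₁
  obtain ⟨v₀, hv₀⟩ := hadj
  obtain ⟨w₀, hw₀H, hw₀N⟩ := Set.not_subset.mp hnsub
  obtain ⟨i₀, hi₀⟩ : ∃ i, f₁ i = v₀ := by rw [← hrange₁] at hv₀; exact hv₀.1
  obtain ⟨j₀, hj₀⟩ : ∃ j, f₁ j = w₀ := by rw [← hrange₁] at hw₀H; exact hw₀H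
  have hv₀N : f₁ i₀ ∈ closedNbhdSet G H₂ := by rw [hi₀]; exact hv₀.2
  have hw₀N' : f₁ j₀ ∉ closedNbhdSet G H₂ := by rw [hj₀]; exact hw₀N
  have hij : i₀ ≠ j₀ := by
    intro he
    rw [he] at hv₀N
    exact hw₀N' hv₀N
  have hfind : ∃ k : ℕ, f₁ (i₀ + ((k + 1 : ℕ) : ZMod m₁)) ∉ closedNbhdSet G H₂ := by
    refine ⟨(j₀ - i₀).val - 1, ?_⟩
    have hvpos : 1 ≤ (j₀ - i₀).val := by
      rcases Nat.eq_zero_or_pos (j₀ - i₀).val with h0 | h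
      · exfalso
        have hc := ZMod.natCast_rightInverse (j₀ - i₀)
        rw [h0] at hc
        simp only [Nat.cast_zero] at hc
        have : j₀ = i₀ := by
          have := hc.symm
          rwa [sub_eq_zero] at this
        exact hij this.symm
      · exact h
    have he : i₀ + (((j₀ - i₀).val - 1 + 1 : ℕ) : ZMod m₁) = j₀ := by
      rw [show (j₀ - i₀).val - 1 + 1 = (j₀ - i₀).val from by omega]
      rw [ZMod.natCast_rightInverse (j₀ - i₀)]
      ring
    rw [he]
    exact hw₀N'
  set k₁ := Nat.find hfind with hk₁def
  set iy : ZMod m₁ := i₀ + ((k₁ : ℕ) : ZMod m₁) with hiydef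
  have huuN : f₁ (i₀ + ((k₁ + 1 : ℕ) : ZMod m₁)) ∉ closedNbhdSet G H₂ := Nat.find_spec hfind
  have hxxN : f₁ iy ∈ closedNbhdSet G H₂ := by
    rw [hiydef]
    rcases Nat.eq_zero_or_pos k₁ with h0 | hpos
    · rw [h0]
      simpa using hv₀N
    · have h := Nat.find_min hfind (show k₁ - 1 < k₁ by omega)
      rw [not_not] at h
      rwa [show k₁ - 1 + 1 = k₁ from by omega] at h
  have huu : i₀ + ((k₁ + 1 : ℕ) : ZMod m₁) = iy + 1 := by
    rw [hiydef]; push_cast; ring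
  have hzz : i₀ + ((k₁ + 2 : ℕ) : ZMod m₁) = iy + 2 := by
    rw [hiydef]; push_cast; ring
  have huuN' : f₁ (iy + 1) ∉ closedNbhdSet G H₂ := by rw [← huu]; exact huuN
  have hxxu : G.Adj (f₁ iy) (f₁ (iy + 1)) := Stmt13.hole_succ hADJ₁ iy
  have huuz : G.Adj (f₁ (iy + 1)) (f₁ (iy + 2)) := by
    have h := Stmt13.hole_succ hADJ₁ (iy + 1)
    rwa [show iy + 1 + 1 = iy + 2 from by ring] at h
  have hzzx : ¬ G.Adj (f₁ (iy + 2)) (f₁ iy) ∧ f₁ (iy + 2) ≠ f₁ iy := by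
    have h := Stmt13.hole_nonadj₂ hm₁4 hinj₁ hADJ₁ iy (iy + 2) 2 (by push_cast; ring)
      (by omega) (by omega)
    exact ⟨fun hh => h.1 hh.symm, fun hh => h.2 hh.symm⟩
  -- the common neighbour y = f₁ iy
  have hy : ∀ k, G.Adj (f₁ iy) (f₂ k) :=
    Stmt13.bound hSmall hm₂4 hinj₂ hADJ₂ hxxu huuz
      (hNfacts _ huuN') hzzx.1 hzzx.2 (hAof _ hxxN)
  -- main claim
  have main : ∀ i : ZMod m₁, f₁ i ∈ closedNbhdSet G H₂ → ∀ k, G.Adj (f₁ i) (f₂ k) := by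
    intro i hiN
    by_cases hiy : i = iy
    · rw [hiy]; exact hy
    · have hneq : f₁ i ≠ f₁ iy := fun he => hiy (hinj₁ he)
      have hadjvy : G.Adj (f₁ i) (f₁ iy) := by
        by_contra hnadj
        rcases hNof _ hiN with ⟨k, hk⟩ | ⟨k, hk⟩
        · exact hnadj (by rw [hk]; exact (hy k).symm)
        · exact Stmt13.sandwich hSmall hm₂4 hinj₂ hADJ₂ _ (f₁ i) hy k hk hnadj hneq
      rcases (hADJ₁ i iy).mp hadjvy with hc | hc
      · -- iy = i + 1, so i = iy - 1 ; use p = f₁ (iy - 2), z = f₁ (iy - 3)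
        have hi : i = iy - 1 := by rw [hc]; ring
        have hpy : ¬ G.Adj (f₁ (iy - 2)) (f₁ iy) ∧ f₁ (iy - 2) ≠ f₁ iy :=
          Stmt13.hole_nonadj₂ hm₁4 hinj₁ hADJ₁ (iy - 2) iy 2 (by push_cast; ring)
            (by omega) (by omega)
        have hpN : ∀ k, ¬ G.Adj (f₁ (iy - 2)) (f₂ k) ∧ f₁ (iy - 2) ≠ f₂ k := by
          intro k
          constructor
          · intro hadjk
            exact Stmt13.sandwich hSmall hm₂4 hinj₂ hADJ₂ _ _ hy k hadjk hpy.1 hpy.2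
          · intro he
            exact hpy.1 (by rw [he]; exact (hy k).symm)
        have e_vp : G.Adj (f₁ i) (f₁ (iy - 2)) := by
          have h := Stmt13.hole_succ hADJ₁ (iy - 2)
          rw [show iy - 2 + 1 = iy - 1 from by ring] at h
          rw [hi]
          exact h.symm
        have e_pz : G.Adj (f₁ (iy - 2)) (f₁ (iy - 3)) := by
          have h := Stmt13.hole_succ hADJ₁ (iy - 3)
          rw [show iy - 3 + 1 = iy - 2 from by ring] at h
          exact h.symm
        have h_zv : ¬ G.Adj (f₁ (iy - 3)) (f₁ i) ∧ f₁ (iy - 3) ≠ f₁ i := by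
          rw [hi]
          exact Stmt13.hole_nonadj₂ hm₁4 hinj₁ hADJ₁ (iy - 3) (iy - 1) 2
            (by push_cast; ring) (by omega) (by omega)
        exact Stmt13.bound hSmall hm₂4 hinj₂ hADJ₂ e_vp e_pz hpN h_zv.1 h_zv.2 (hAof _ hiN)
      · -- i = iy + 1 ; use p = f₁ (iy + 2), z = f₁ (iy + 3)
        have hpy : ¬ G.Adj (f₁ (iy + 2)) (f₁ iy) ∧ f₁ (iy + 2) ≠ f₁ iy := by
          have h := Stmt13.hole_nonadj₂ hm₁4 hinj₁ hADJ₁ iy (iy + 2) 2 (by push_cast; ring)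
            (by omega) (by omega)
          exact ⟨fun hh => h.1 hh.symm, fun hh => h.2 hh.symm⟩
        have hpN : ∀ k, ¬ G.Adj (f₁ (iy + 2)) (f₂ k) ∧ f₁ (iy + 2) ≠ f₂ k := by
          intro k
          constructor
          · intro hadjk
            exact Stmt13.sandwich hSmall hm₂4 hinj₂ hADJ₂ _ _ hy k hadjk hpy.1 hpy.2
          · intro he
            exact hpy.1 (by rw [he]; exact (hy k).symm)
        have e_vp : G.Adj (f₁ i) (f₁ (iy + 2)) := by
          have h := Stmt13.hole_succ hADJ₁ (iy + 1)
          rw [show iy + 1 + 1 = iy + 2 from by ring] at h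
          rw [hc]
          exact h
        have e_pz : G.Adj (f₁ (iy + 2)) (f₁ (iy + 3)) := by
          have h := Stmt13.hole_succ hADJ₁ (iy + 2)
          rwa [show iy + 2 + 1 = iy + 3 from by ring] at h
        have h_zv : ¬ G.Adj (f₁ (iy + 3)) (f₁ i) ∧ f₁ (iy + 3) ≠ f₁ i := by
          rw [hc]
          have h := Stmt13.hole_nonadj₂ hm₁4 hinj₁ hADJ₁ (iy + 1) (iy + 3) 2
            (by push_cast; ring) (by omega) (by omega)
          exact ⟨fun hh => h.1 hh.symm, fun hh => h.2 hh.symm⟩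
        exact Stmt13.bound hSmall hm₂4 hinj₂ hADJ₂ e_vp e_pz hpN h_zv.1 h_zv.2 (hAof _ hiN)
  constructor
  · intro v hv
    obtain ⟨i, rfl⟩ : ∃ i, f₁ i = v := by rw [← hrange₁] at hv; exact hv.1
    intro q hq
    rw [← hrange₂] at hq
    obtain ⟨k, rfl⟩ := hq
    exact main i hv.2 k
  · rw [Set.disjoint_left]
    intro v hv1 hv2
    have hvN : v ∈ closedNbhdSet G H₂ := by
      rw [Stmt13.mem_cns]
      exact ⟨v, hv2, Or.inl rfl⟩
    obtain ⟨i, rfl⟩ : ∃ i, f₁ i = v := by rw [← hrange₁] at hv1; exact hv1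
    rw [← hrange₂] at hv2
    obtain ⟨k, hk⟩ := hv2
    have h := main i hvN k
    rw [hk] at h
    exact G.loopless.irrefl _ h
end

section
/- Let G be a finite prereduced graph and let H be a hole of G whose length is minimum among all the holes of G that are congenial to H. Then the set N̂(H) of common neighbors of H separates N[H] \ N̂(H) from V(G) \ N[H]: in the graph G − N̂(H), there is no path connecting a vertex of N[H] \ N̂(H) to a vertex of V(G) \ N[H]. -/
lemma exists_rep {W : Type*} (G : SimpleGraph W) (h : IsIntervalGraph G) :
    ∃ a b : W → ℝ, (∀ v, a v ≤ b v) ∧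
      ∀ u v : W, u ≠ v → (G.Adj u v ↔ (a u ≤ b v ∧ a v ≤ b u)) := by
  obtain ⟨f, hf, hadj⟩ := h
  choose a b hab hIcc using hf
  refine ⟨a, b, hab, fun u v huv => ?_⟩
  rw [hadj u v huv, hIcc, hIcc]
  simp only [Set.Icc_inter_Icc, Set.nonempty_Icc, sup_le_iff, le_inf_iff]
  constructor
  · rintro ⟨⟨_, h2⟩, h3, _⟩; exact ⟨h3, h2⟩
  · rintro ⟨h1, h2⟩; exact ⟨⟨hab u, h2⟩, h1, hab v⟩

/-- In a prereduced graph, every set of at most 10 vertices induces an interval graph. -/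

lemma rep_nonedge {W : Type*} {G : SimpleGraph W} {a b : W → ℝ}
    (hadj : ∀ u v : W, u ≠ v → (G.Adj u v ↔ (a u ≤ b v ∧ a v ≤ b u)))
    {u v : W} (hne : u ≠ v) (hn : ¬ G.Adj u v) : b v < a u ∨ b u < a v := by
  rcases le_or_gt (a u) (b v) with h1 | h1
  · rcases le_or_gt (a v) (b u) with h2 | h2
    · exact absurd ((hadj u v hne).mpr ⟨h1, h2⟩) hn
    · exact Or.inr h2
  · exact Or.inl h1

lemma prereduced_small {V : Type*} [Fintype V] (G : SimpleGraph V) (hG : Prereduced G)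
    (X : Set V) (hX : X.ncard ≤ 10) : IsIntervalGraph (G.induce X) := by
  by_contra hbad
  -- take a subset of X of minimal cardinality inducing a non-interval graph
  classical
  set P : ℕ → Prop := fun n => ∃ Y : Set V, Y ⊆ X ∧ Y.ncard = n ∧
    ¬ IsIntervalGraph (G.induce Y) with hP
  haveI : DecidablePred P := Classical.decPred P
  have hex : ∃ n, P n := ⟨X.ncard, X, subset_rfl, rfl, hbad⟩
  obtain ⟨Y, hYX, hYn, hYbad⟩ := Nat.find_spec hex
  set n := Nat.find hex with hn
  have hmin : ∀ Z : Set V, Z ⊆ X → ¬ IsIntervalGraph (G.induce Z) → n ≤ Z.ncard :=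
    fun Z h1 h2 => Nat.find_le ⟨Z, h1, rfl, h2⟩
  apply hG Y (le_trans (hYn ▸ Set.ncard_le_ncard hYX (Set.toFinite X)) hX)
  constructor
  · exact hYbad
  · intro Z hZY
    by_contra hZbad
    have h1 : n ≤ Z.ncard := hmin Z (hZY.subset.trans hYX) hZbad
    have h2 : Z.ncard < Y.ncard := Set.ncard_lt_ncard hZY (Set.toFinite Y)
    omega

lemma net_not_interval {W : Type*} (G : SimpleGraph W) (t1 t2 t3 p1 p2 p3 : W)
    (e12 : G.Adj t1 t2) (e13 : G.Adj t1 t3) (e23 : G.Adj t2 t3)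
    (f1 : G.Adj p1 t1) (f2 : G.Adj p2 t2) (f3 : G.Adj p3 t3)
    (m12 : p1 ≠ t2) (m13 : p1 ≠ t3) (m21 : p2 ≠ t1) (m23 : p2 ≠ t3)
    (m31 : p3 ≠ t1) (m32 : p3 ≠ t2)
    (n12 : ¬ G.Adj p1 t2) (n13 : ¬ G.Adj p1 t3) (n21 : ¬ G.Adj p2 t1)
    (n23 : ¬ G.Adj p2 t3) (n31 : ¬ G.Adj p3 t1) (n32 : ¬ G.Adj p3 t2) :
    ¬ IsIntervalGraph G := by
  intro hIG
  obtain ⟨a, b, hab, hadj⟩ := exists_rep G hIG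
  obtain ⟨E12a, E12b⟩ := (hadj _ _ e12.ne).mp e12
  obtain ⟨E13a, E13b⟩ := (hadj _ _ e13.ne).mp e13
  obtain ⟨E23a, E23b⟩ := (hadj _ _ e23.ne).mp e23
  obtain ⟨F1a, F1b⟩ := (hadj _ _ f1.ne).mp f1
  obtain ⟨F2a, F2b⟩ := (hadj _ _ f2.ne).mp f2
  obtain ⟨F3a, F3b⟩ := (hadj _ _ f3.ne).mp f3
  rcases rep_nonedge hadj m12 n12 with N1 | N1 <;>
  rcases rep_nonedge hadj m13 n13 with N2 | N2 <;>
  rcases rep_nonedge hadj m21 n21 with N3 | N3 <;>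
  rcases rep_nonedge hadj m23 n23 with N4 | N4 <;>
  rcases rep_nonedge hadj m31 n31 with N5 | N5 <;>
  rcases rep_nonedge hadj m32 n32 with N6 | N6 <;>
  linarith [hab t1, hab t2, hab t3, hab p1, hab p2, hab p3]

lemma claw_not_interval {W : Type*} (G : SimpleGraph W) (z u1 u2 u3 w1 w2 w3 : W)
    (e1 : G.Adj z u1) (e2 : G.Adj z u2) (e3 : G.Adj z u3)
    (f1 : G.Adj u1 w1) (f2 : G.Adj u2 w2) (f3 : G.Adj u3 w3)
    (m12 : u1 ≠ u2) (m13 : u1 ≠ u3) (m23 : u2 ≠ u3)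
    (mw1 : w1 ≠ z) (mw2 : w2 ≠ z) (mw3 : w3 ≠ z)
    (n12 : ¬ G.Adj u1 u2) (n13 : ¬ G.Adj u1 u3) (n23 : ¬ G.Adj u2 u3)
    (nw1 : ¬ G.Adj w1 z) (nw2 : ¬ G.Adj w2 z) (nw3 : ¬ G.Adj w3 z) :
    ¬ IsIntervalGraph G := by
  intro hIG
  obtain ⟨a, b, hab, hadj⟩ := exists_rep G hIG
  obtain ⟨E1a, E1b⟩ := (hadj _ _ e1.ne).mp e1
  obtain ⟨E2a, E2b⟩ := (hadj _ _ e2.ne).mp e2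
  obtain ⟨E3a, E3b⟩ := (hadj _ _ e3.ne).mp e3
  obtain ⟨F1a, F1b⟩ := (hadj _ _ f1.ne).mp f1
  obtain ⟨F2a, F2b⟩ := (hadj _ _ f2.ne).mp f2
  obtain ⟨F3a, F3b⟩ := (hadj _ _ f3.ne).mp f3
  rcases rep_nonedge hadj m12 n12 with N1 | N1 <;>
  rcases rep_nonedge hadj m13 n13 with N2 | N2 <;>
  rcases rep_nonedge hadj m23 n23 with N3 | N3 <;>
  rcases rep_nonedge hadj mw1 nw1 with N4 | N4 <;>
  rcases rep_nonedge hadj mw2 nw2 with N5 | N5 <;>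
  rcases rep_nonedge hadj mw3 nw3 with N6 | N6 <;>
  linarith [hab z, hab u1, hab u2, hab u3, hab w1, hab w2, hab w3]

lemma dagger_not_interval {W : Type*} (G : SimpleGraph W) (p q c0 c1 c2 c3 c4 : W)
    (e01 : G.Adj c0 c1) (e12 : G.Adj c1 c2) (e23 : G.Adj c2 c3) (e34 : G.Adj c3 c4)
    (eq1 : G.Adj q c1) (eq2 : G.Adj q c2) (eq3 : G.Adj q c3) (epq : G.Adj p q)
    (m13 : c1 ≠ c3) (mp1 : p ≠ c1) (mp2 : p ≠ c2) (mp3 : p ≠ c3)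
    (mq0 : q ≠ c0) (mq4 : q ≠ c4)
    (n13 : ¬ G.Adj c1 c3) (np1 : ¬ G.Adj p c1) (np2 : ¬ G.Adj p c2)
    (np3 : ¬ G.Adj p c3) (nq0 : ¬ G.Adj q c0) (nq4 : ¬ G.Adj q c4) :
    ¬ IsIntervalGraph G := by
  intro hIG
  obtain ⟨a, b, hab, hadj⟩ := exists_rep G hIG
  obtain ⟨E01a, E01b⟩ := (hadj _ _ e01.ne).mp e01
  obtain ⟨E12a, E12b⟩ := (hadj _ _ e12.ne).mp e12
  obtain ⟨E23a, E23b⟩ := (hadj _ _ e23.ne).mp e23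
  obtain ⟨E34a, E34b⟩ := (hadj _ _ e34.ne).mp e34
  obtain ⟨Q1a, Q1b⟩ := (hadj _ _ eq1.ne).mp eq1
  obtain ⟨Q2a, Q2b⟩ := (hadj _ _ eq2.ne).mp eq2
  obtain ⟨Q3a, Q3b⟩ := (hadj _ _ eq3.ne).mp eq3
  obtain ⟨Pa, Pb⟩ := (hadj _ _ epq.ne).mp epq
  rcases rep_nonedge hadj m13 n13 with N1 | N1 <;>
  rcases rep_nonedge hadj mp1 np1 with N2 | N2 <;>
  rcases rep_nonedge hadj mp2 np2 with N3 | N3 <;>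
  rcases rep_nonedge hadj mp3 np3 with N4 | N4 <;>
  rcases rep_nonedge hadj mq0 nq0 with N5 | N5 <;>
  rcases rep_nonedge hadj mq4 nq4 with N6 | N6 <;>
  linarith [hab p, hab q, hab c0, hab c1, hab c2, hab c3, hab c4]

lemma zmod_cast_inj {m : ℕ} {k l : ℕ} (hk : k < m) (hl : l < m) :
    ((k : ZMod m) = (l : ZMod m)) ↔ k = l := by
  constructor
  · intro h
    have := congrArg ZMod.val h
    rwa [ZMod.val_cast_of_lt hk, ZMod.val_cast_of_lt hl] at this
  · rintro rfl; rfl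

lemma cycle_core {W : Type*} (G : SimpleGraph W) (m : ℕ) (hm : 4 ≤ m)
    (f : ZMod m → W) (hinj : Function.Injective f)
    (hadj : ∀ i j : ZMod m, G.Adj (f i) (f j) ↔ (j = i + 1 ∨ i = j + 1))
    (a b : W → ℝ) (hab : ∀ v, a v ≤ b v)
    (hrep : ∀ u v : W, u ≠ v → (G.Adj u v ↔ (a u ≤ b v ∧ a v ≤ b u)))
    (hor : b (f ((0:ℕ) : ZMod m)) < a (f ((2:ℕ) : ZMod m))) : False := by
  haveI : Fact (1 < m) := ⟨by omega⟩
  set F : ℕ → W := fun k => f ((k : ℕ) : ZMod m) with hF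
  have E : ∀ k : ℕ, a (F k) ≤ b (F (k+1)) ∧ a (F (k+1)) ≤ b (F k) := by
    intro k
    have hadjk : G.Adj (F k) (F (k+1)) := by
      rw [hF, hadj]
      left; push_cast; ring
    exact (hrep _ _ hadjk.ne).mp hadjk
  have horF : b (F 0) < a (F 2) := hor
  obtain ⟨g, hg1, hg2⟩ : ∃ g : ℝ, b (F 0) < g ∧ g < a (F 2) :=
    ⟨(b (F 0) + a (F 2))/2, by linarith, by linarith⟩
  have hFm : F m = F 0 := by simp only [hF, ZMod.natCast_self, Nat.cast_zero]
  have hPm : b (F m) < g := by rw [hFm]; exact hg1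
  have exQ : ∃ k, 3 ≤ k ∧ b (F k) < g := ⟨m, by omega, hPm⟩
  classical
  obtain ⟨hk03, hk0P⟩ := Nat.find_spec exQ
  set k0 := Nat.find exQ with hk0
  have hk0m : k0 ≤ m := Nat.find_min' exQ ⟨by omega, hPm⟩
  set j := k0 - 1 with hj
  have hj2 : 2 ≤ j := by omega
  have hjm : j < m := by omega
  have hjk : j + 1 = k0 := by omega
  have hjP : ¬ (b (F j) < g) := by
    rcases Nat.lt_or_ge j 3 with h3 | h3
    · have hj2' : j = 2 := by omega
      rw [hj2']
      intro hc
      linarith [hab (F 2)]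
    · have hnq := Nat.find_min exQ (show j < k0 by omega)
      intro hc
      exact hnq ⟨h3, hc⟩
  have hgj1 : a (F j) ≤ g := by
    have h5 := (E j).1
    rw [hjk] at h5
    linarith [hk0P]
  have hgj2 : g ≤ b (F j) := le_of_not_gt hjP
  have hjne2 : j ≠ 2 := by
    intro h2
    rw [h2] at hgj1
    linarith
  have hj3 : 3 ≤ j := by omega
  have hg11 : a (F 1) ≤ g := by linarith [(E 0).2]
  have hg12 : g ≤ b (F 1) := by linarith [(E 1).2]
  have hne : F 1 ≠ F j := by
    apply hinj.ne
    intro h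
    exact absurd ((zmod_cast_inj (m := m) (by omega) hjm).mp h) (by omega)
  have hadj1j : G.Adj (F 1) (F j) := (hrep _ _ hne).mpr ⟨by linarith, by linarith⟩
  rw [hF] at hadj1j
  rw [hadj] at hadj1j
  rcases hadj1j with h | h
  · rw [show ((1:ℕ) : ZMod m) + 1 = ((2:ℕ) : ZMod m) by push_cast; ring] at h
    exact absurd ((zmod_cast_inj (m := m) hjm (by omega)).mp h) (by omega)
  · rw [show ((j : ZMod m)) + 1 = ((j + 1 : ℕ) : ZMod m) by push_cast; ring] at h
    rcases Nat.lt_or_ge (j+1) m with hlt | hge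
    · exact absurd ((zmod_cast_inj (m := m) (by omega) hlt).mp h) (by omega)
    · have hjm1 : j + 1 = m := by omega
      rw [hjm1, ZMod.natCast_self,
        show ((1:ℕ) : ZMod m) = (1 : ZMod m) by push_cast; ring] at h
      exact one_ne_zero h

lemma cycle_not_interval {W : Type*} (G : SimpleGraph W) (m : ℕ) (hm : 4 ≤ m)
    (f : ZMod m → W) (hinj : Function.Injective f)
    (hadj : ∀ i j : ZMod m, G.Adj (f i) (f j) ↔ (j = i + 1 ∨ i = j + 1)) :
    ¬ IsIntervalGraph G := by
  intro hIG
  haveI : Fact (1 < m) := ⟨by omega⟩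
  obtain ⟨a, b, hab, hrep⟩ := exists_rep G hIG
  have hne02 : f ((0:ℕ) : ZMod m) ≠ f ((2:ℕ) : ZMod m) := by
    apply hinj.ne
    intro h
    exact absurd ((zmod_cast_inj (m := m) (by omega) (by omega)).mp h) (by omega)
  have hnadj02 : ¬ G.Adj (f ((0:ℕ) : ZMod m)) (f ((2:ℕ) : ZMod m)) := by
    rw [hadj]
    rintro (h | h)
    · rw [show ((0:ℕ) : ZMod m) + 1 = ((1:ℕ) : ZMod m) by push_cast; ring] at h
      exact absurd ((zmod_cast_inj (m := m) (by omega) (by omega)).mp h) (by omega)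
    · rw [show ((2:ℕ) : ZMod m) + 1 = ((3:ℕ) : ZMod m) by push_cast; ring] at h
      exact absurd ((zmod_cast_inj (m := m) (by omega) (by omega)).mp h) (by omega)
  rcases le_or_gt (a (f ((0:ℕ) : ZMod m))) (b (f ((2:ℕ) : ZMod m))) with h1 | h1
  · rcases le_or_gt (a (f ((2:ℕ) : ZMod m))) (b (f ((0:ℕ) : ZMod m))) with h2 | h2
    · exact hnadj02 ((hrep _ _ hne02).mpr ⟨h1, h2⟩)
    · exact cycle_core G m hm f hinj hadj a b hab hrep h2
  · have hrev : ∀ i j : ZMod m, G.Adj (f (2 - i)) (f (2 - j)) ↔ (j = i + 1 ∨ i = j + 1) := by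
      intro i j
      rw [hadj]
      constructor
      · rintro (h | h)
        · exact Or.inr (by linear_combination h)
        · exact Or.inl (by linear_combination h)
      · rintro (h | h)
        · exact Or.inr (by linear_combination h)
        · exact Or.inl (by linear_combination h)
    have hinj' : Function.Injective (fun i : ZMod m => f (2 - i)) := by
      intro i j h
      have h2 : (2 : ZMod m) - i = 2 - j := hinj h
      linear_combination -h2
    apply cycle_core G m hm (fun i => f (2 - i)) hinj' hrev a b hab hrep
    show b (f (2 - ((0:ℕ) : ZMod m))) < a (f (2 - ((2:ℕ):ZMod m)))
    rw [show (2 : ZMod m) - ((0:ℕ) : ZMod m) = ((2:ℕ) : ZMod m) by push_cast; ring,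
      show (2 : ZMod m) - ((2:ℕ) : ZMod m) = ((0:ℕ) : ZMod m) by push_cast; ring]
    exact h1

lemma hole_ncard {V : Type*} (G : SimpleGraph V) (m : ℕ) (hm : 4 ≤ m) (f : ZMod m → V)
    (hinj : Function.Injective f) : (Set.range f).ncard = m := by
  haveI : NeZero m := ⟨by omega⟩
  rw [← Set.image_univ, Set.ncard_image_of_injective _ hinj, Set.ncard_univ,
    Nat.card_eq_fintype_card, ZMod.card]

/-- In a prereduced graph all holes have at least 11 vertices. -/

lemma no_small_hole {V : Type*} [Fintype V] (G : SimpleGraph V) (hG : Prereduced G)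
    (C : Set V) (hC : IsHole G C) : 11 ≤ C.ncard := by
  obtain ⟨m, hm, f, hinj, hrange, hadj⟩ := hC
  have hnc : C.ncard = m := by rw [← hrange]; exact hole_ncard G m hm f hinj
  rw [hnc]
  by_contra hsmall
  push_neg at hsmall
  have hint : IsIntervalGraph (G.induce C) := prereduced_small G hG C (by omega)
  set f' : ZMod m → ↥C := fun i => ⟨f i, by rw [← hrange]; exact Set.mem_range_self i⟩ with hf'
  apply cycle_not_interval (G.induce C) m hm f' ?_ ?_ hint
  · intro i j hij
    apply hinj
    exact congrArg Subtype.val hij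
  · intro i j
    exact hadj i j

/-- Helper: successor equation via val, for nonzero elements. -/

lemma zmod_succ_iff {n : ℕ} (hn : 2 ≤ n) (z w : ZMod n) (hz : z ≠ 0) (hw : w ≠ 0) :
    w = z + 1 ↔ w.val = z.val + 1 := by
  haveI : NeZero n := ⟨by omega⟩
  have hzv : ((z.val : ℕ) : ZMod n) = z := ZMod.natCast_rightInverse z
  have hwv : ((w.val : ℕ) : ZMod n) = w := ZMod.natCast_rightInverse w
  have hzlt : z.val < n := ZMod.val_lt z
  have hwlt : w.val < n := ZMod.val_lt w
  have hz0 : z.val ≠ 0 := fun h => hz ((ZMod.val_eq_zero z).mp h)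
  have hw0 : w.val ≠ 0 := fun h => hw ((ZMod.val_eq_zero w).mp h)
  constructor
  · intro h
    have h2 : ((w.val : ℕ) : ZMod n) = ((z.val + 1 : ℕ) : ZMod n) := by
      rw [Nat.cast_add, Nat.cast_one, hwv, hzv, h]
    rcases Nat.lt_or_ge (z.val + 1) n with hlt | hge
    · exact (zmod_cast_inj hwlt hlt).mp h2
    · have hzn : z.val + 1 = n := by omega
      rw [hzn, ZMod.natCast_self] at h2
      exact absurd ((ZMod.val_eq_zero w).mpr ((hwv ▸ h2 : _))) hw0
  · intro h
    rw [← hwv, h, Nat.cast_add, Nat.cast_one, hzv]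

/-- Extending a hole through a vertex `x`: if `x` sees `f i` and `f (i+(k+1))` but no
vertex strictly between, the cycle through `x` and the arc is a hole with `k+3` vertices. -/

lemma hole_extend {V : Type*} (G : SimpleGraph V) (m : ℕ) (hm : 11 ≤ m)
    (f : ZMod m → V) (hinj : Function.Injective f)
    (hadj : ∀ i j : ZMod m, G.Adj (f i) (f j) ↔ (j = i + 1 ∨ i = j + 1))
    (x : V) (hx : ∀ i, x ≠ f i) (i : ZMod m) (k : ℕ) (hk1 : 1 ≤ k) (hk3 : k ≤ m - 3)
    (hAi : G.Adj x (f i)) (hAe : G.Adj x (f (i + ((k + 1 : ℕ) : ZMod m))))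
    (hGap : ∀ t : ℕ, 1 ≤ t → t ≤ k → ¬ G.Adj x (f (i + (t : ZMod m)))) :
    ∃ C : Set V, IsHole G C ∧ C.ncard = k + 3 ∧ x ∈ C ∧
      (∀ t : ℕ, t ≤ k + 1 → f (i + (t : ZMod m)) ∈ C) ∧
      (∀ v ∈ C, v = x ∨ ∃ t : ℕ, t ≤ k + 1 ∧ v = f (i + (t : ZMod m))) := by
  set n : ℕ := k + 3 with hn
  have hn4 : 4 ≤ n := by omega
  haveI : NeZero n := ⟨by omega⟩
  haveI : NeZero m := ⟨by omega⟩
  haveI : Fact (1 < n) := ⟨by omega⟩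
  set F : ZMod n → V := fun z => if z = 0 then x else f (i + ((z.val - 1 : ℕ) : ZMod m)) with hF
  have hvalbound : ∀ z : ZMod n, z ≠ 0 → 1 ≤ z.val ∧ z.val ≤ k + 2 := by
    intro z hz
    have h1 : z.val < n := ZMod.val_lt z
    have h2 : z.val ≠ 0 := fun h => hz ((ZMod.val_eq_zero z).mp h)
    omega
  -- value of F at nonzero z
  have hFnz : ∀ z : ZMod n, z ≠ 0 → F z = f (i + ((z.val - 1 : ℕ) : ZMod m)) := by
    intro z hz; simp only [hF, if_neg hz]
  have hF0 : F 0 = x := by simp only [hF, if_pos rfl]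
  -- arithmetic helper on the m side
  have hoffinj : ∀ s t : ℕ, s < m → t < m →
      ((i + (s : ZMod m) = i + (t : ZMod m)) ↔ s = t) := by
    intro s t hs ht
    constructor
    · intro h
      exact (zmod_cast_inj hs ht).mp (by exact add_left_cancel h)
    · rintro rfl; rfl
  have hFinj : Function.Injective F := by
    intro z w h
    by_cases hz : z = 0 <;> by_cases hw : w = 0
    · rw [hz, hw]
    · rw [hz, hF0, hFnz w hw] at h; exact absurd h (hx _)
    · rw [hw, hF0, hFnz z hz] at h; exact absurd h.symm (hx _)
    · rw [hFnz z hz, hFnz w hw] at h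
      have hz' := hvalbound z hz
      have hw' := hvalbound w hw
      have := (hoffinj _ _ (by omega) (by omega)).mp (hinj h)
      have hv : z.val = w.val := by omega
      exact ZMod.val_injective n hv
  -- adjacency of x with arc vertices
  have hxarc : ∀ t : ℕ, t ≤ k + 1 → (G.Adj x (f (i + (t : ZMod m))) ↔ (t = 0 ∨ t = k + 1)) := by
    intro t ht
    constructor
    · intro h
      by_contra hcon
      push_neg at hcon
      exact hGap t (by omega) (by omega) h
    · rintro (rfl | rfl)
      · simpa using hAi
      · exact hAe
  -- the main adjacency property of F
  have hFadj : ∀ z w : ZMod n, G.Adj (F z) (F w) ↔ (w = z + 1 ∨ z = w + 1) := by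
    have key : ∀ z w : ZMod n, z = 0 → w ≠ 0 → (G.Adj (F z) (F w) ↔ (w = z + 1 ∨ z = w + 1)) := by
      intro z w hz hw
      subst hz
      rw [hF0, hFnz w hw]
      have hw' := hvalbound w hw
      rw [hxarc (w.val - 1) (by omega)]
      constructor
      · rintro (h | h)
        · left
          have : w.val = 1 := by omega
          rw [zero_add]
          apply ZMod.val_injective
          rw [this, ZMod.val_one]
        · right
          symm
          have hwv : w.val = k + 2 := by omega
          have h5 : w + 1 = ((w.val + 1 : ℕ) : ZMod n) := by
            rw [Nat.cast_add, Nat.cast_one, ZMod.natCast_rightInverse w]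
          rw [h5, hwv, show k + 2 + 1 = n by omega, ZMod.natCast_self]
      · rintro (h | h)
        · left
          rw [zero_add] at h
          have : w.val = 1 := by
            first
            | (rw [h]; exact ZMod.val_one n)
            | rw [h]
          omega
        · right
          have h2 : w + 1 = 0 := h.symm
          have h3 : ((w.val + 1 : ℕ) : ZMod n) = 0 := by
            rw [Nat.cast_add, Nat.cast_one, ZMod.natCast_rightInverse w]; exact h2
          have h4 : n ∣ w.val + 1 := (ZMod.natCast_eq_zero_iff _ _).mp h3
          have h6 : n ≤ w.val + 1 := Nat.le_of_dvd (by omega) h4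
          have h7 : w.val < n := ZMod.val_lt w
          omega
    intro z w
    by_cases hz : z = 0 <;> by_cases hw : w = 0
    · subst hz; subst hw
      simp only [hF0]
      constructor
      · intro h; exact absurd rfl (G.ne_of_adj h)
      · rintro (h | h) <;>
        · exfalso
          rw [zero_add] at h
          exact one_ne_zero h.symm
    · exact key z w hz hw
    · rw [SimpleGraph.adj_comm, or_comm]
      exact key w z hw hz
    · rw [hFnz z hz, hFnz w hw]
      have hz' := hvalbound z hz
      have hw' := hvalbound w hw
      rw [hadj]
      have e1 : i + ((z.val - 1 : ℕ) : ZMod m) + 1 = i + ((z.val : ℕ) : ZMod m) := by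
        have : ((z.val : ℕ) : ZMod m) = ((z.val - 1 : ℕ) : ZMod m) + 1 := by
          rw [show (z.val : ℕ) = (z.val - 1) + 1 by omega]
          push_cast
          ring
        rw [this]
        ring
      have e2 : i + ((w.val - 1 : ℕ) : ZMod m) + 1 = i + ((w.val : ℕ) : ZMod m) := by
        have : ((w.val : ℕ) : ZMod m) = ((w.val - 1 : ℕ) : ZMod m) + 1 := by
          rw [show (w.val : ℕ) = (w.val - 1) + 1 by omega]
          push_cast
          ring
        rw [this]
        ring
      rw [e1, e2, hoffinj _ _ (by omega) (by omega), hoffinj _ _ (by omega) (by omega),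
        zmod_succ_iff (by omega) z w hz hw, zmod_succ_iff (by omega) w z hw hz]
      omega
  refine ⟨Set.range F, ⟨n, hn4, F, hFinj, rfl, hFadj⟩, ?_, ⟨0, hF0⟩, ?_, ?_⟩
  · rw [← Set.image_univ, Set.ncard_image_of_injective _ hFinj, Set.ncard_univ,
      Nat.card_eq_fintype_card, ZMod.card]
  · intro t ht
    refine ⟨((t + 1 : ℕ) : ZMod n), ?_⟩
    have hne : ((t + 1 : ℕ) : ZMod n) ≠ 0 := by
      intro h
      have h9 : ((t + 1 : ℕ) : ZMod n) = ((0 : ℕ) : ZMod n) := by rw [h]; simp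
      have := (zmod_cast_inj (show t + 1 < n by omega) (show 0 < n by omega)).mp h9
      omega
    rw [hFnz _ hne, ZMod.val_cast_of_lt (show t + 1 < n by omega)]
    first
    | (congr 2; omega)
    | congr 2
  · rintro v ⟨z, rfl⟩
    by_cases hz : z = 0
    · left; rw [hz, hF0]
    · right
      have hz' := hvalbound z hz
      exact ⟨z.val - 1, by omega, (hFnz z hz)⟩

lemma hole_reverse {V : Type*} (G : SimpleGraph V) (m : ℕ) (f : ZMod m → V)
    (hinj : Function.Injective f)
    (hadj : ∀ i j : ZMod m, G.Adj (f i) (f j) ↔ (j = i + 1 ∨ i = j + 1)) :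
    Function.Injective (fun t : ZMod m => f (-t)) ∧
      ∀ i j : ZMod m, G.Adj (f (-i)) (f (-j)) ↔ (j = i + 1 ∨ i = j + 1) := by
  constructor
  · intro i j h
    have h2 : -i = -j := hinj h
    linear_combination -h2
  · intro i j
    rw [hadj]
    constructor
    · rintro (h | h)
      · exact Or.inr (by linear_combination h)
      · exact Or.inl (by linear_combination h)
    · rintro (h | h)
      · exact Or.inr (by linear_combination h)
      · exact Or.inl (by linear_combination h)

/-- Adjacency along a hole in terms of natural-number offsets from a base point. -/

lemma hole_adj_off {V : Type*} (G : SimpleGraph V) (m : ℕ) (hm : 4 ≤ m) (f : ZMod m → V)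
    (hadj : ∀ i j : ZMod m, G.Adj (f i) (f j) ↔ (j = i + 1 ∨ i = j + 1))
    (c : ZMod m) (o1 o2 : ℕ) (h1 : o1 < m) (h2 : o2 < m) :
    G.Adj (f (c + (o1 : ZMod m))) (f (c + (o2 : ZMod m))) ↔
      (o2 = o1 + 1 ∨ o1 = o2 + 1 ∨ (o1 + 1 = m ∧ o2 = 0) ∨ (o2 + 1 = m ∧ o1 = 0)) := by
  rw [hadj]
  have key : ∀ p q : ℕ, p < m → q < m →
      ((c + (q : ZMod m) = c + (p : ZMod m) + 1) ↔ (q = p + 1 ∨ (p + 1 = m ∧ q = 0))) := by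
    intro p q hp hq
    have e : c + (p : ZMod m) + 1 = c + ((p + 1 : ℕ) : ZMod m) := by push_cast; ring
    rw [e]
    rcases Nat.lt_or_ge (p + 1) m with hlt | hge
    · rw [add_right_inj, zmod_cast_inj hq hlt]
      omega
    · have hpm : p + 1 = m := by omega
      rw [hpm, ZMod.natCast_self, add_right_inj,
        show (0 : ZMod m) = ((0 : ℕ) : ZMod m) by simp, zmod_cast_inj hq (by omega)]
      omega
  rw [key o1 o2 h1 h2, key o2 o1 h2 h1]
  tauto

/-- Equality along a hole in terms of offsets. -/

lemma hole_eq_off {m : ℕ} (c : ZMod m) {o1 o2 : ℕ} (h1 : o1 < m) (h2 : o2 < m) :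
    (c + (o1 : ZMod m) = c + (o2 : ZMod m)) ↔ o1 = o2 := by
  rw [add_right_inj, zmod_cast_inj h1 h2]

/-- After a neighbor of `x`, a non-neighbour is followed by another non-neighbour
(otherwise there is a hole of length 4). -/

lemma gap2 {V : Type*} [Fintype V] (G : SimpleGraph V) (hG : Prereduced G)
    (m : ℕ) (hm : 11 ≤ m) (f : ZMod m → V) (hinj : Function.Injective f)
    (hadj : ∀ i j : ZMod m, G.Adj (f i) (f j) ↔ (j = i + 1 ∨ i = j + 1))
    (x : V) (hxf : ∀ i, x ≠ f i) (i : ZMod m)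
    (hAi : G.Adj x (f i)) (h1 : ¬ G.Adj x (f (i + 1))) : ¬ G.Adj x (f (i + 2)) := by
  intro h2
  obtain ⟨C, hCh, hCn, -⟩ := hole_extend G m hm f hinj hadj x hxf i 1 le_rfl (by omega)
    hAi (by rw [show ((1 + 1 : ℕ) : ZMod m) = 2 by push_cast; ring]; exact h2)
    (fun t ht1 ht2 => by
      have ht : t = 1 := by omega
      subst ht
      rw [Nat.cast_one]
      exact h1)
  have := no_small_hole G hG C hCh
  omega

lemma induce_ne {V : Type*} {S : Set V} {u v : V} (hu : u ∈ S) (hv : v ∈ S) (h : u ≠ v) :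
    (⟨u, hu⟩ : S) ≠ (⟨v, hv⟩ : S) := fun hh => h (congrArg Subtype.val hh)

lemma ncard6 {V : Type*} (a b c d e f : V) : ({a, b, c, d, e, f} : Set V).ncard ≤ 6 := by
  refine (Set.ncard_insert_le _ _).trans ?_
  refine Nat.succ_le_succ ?_
  refine (Set.ncard_insert_le _ _).trans ?_
  refine Nat.succ_le_succ ?_
  refine (Set.ncard_insert_le _ _).trans ?_
  refine Nat.succ_le_succ ?_
  refine (Set.ncard_insert_le _ _).trans ?_
  refine Nat.succ_le_succ ?_
  refine (Set.ncard_insert_le _ _).trans ?_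
  refine Nat.succ_le_succ ?_
  simp

lemma ncard7 {V : Type*} (a b c d e f g : V) : ({a, b, c, d, e, f, g} : Set V).ncard ≤ 7 := by
  refine (Set.ncard_insert_le _ _).trans ?_
  refine Nat.succ_le_succ ?_
  refine (Set.ncard_insert_le _ _).trans ?_
  refine Nat.succ_le_succ ?_
  refine (Set.ncard_insert_le _ _).trans ?_
  refine Nat.succ_le_succ ?_
  refine (Set.ncard_insert_le _ _).trans ?_
  refine Nat.succ_le_succ ?_
  refine (Set.ncard_insert_le _ _).trans ?_
  refine Nat.succ_le_succ ?_
  refine (Set.ncard_insert_le _ _).trans ?_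
  refine Nat.succ_le_succ ?_
  simp

/-- The key statement: no edge can leave `N[H] \ N̂(H)` towards `V ∖ N[H]`. -/

lemma key_no_edge {V : Type*} [Fintype V] (G : SimpleGraph V) (hG : Prereduced G)
    (H : Set V) (hH : IsHole G H)
    (hmin : ∀ H' : Set V, IsHole G H' → Congenial G H H' → H.ncard ≤ H'.ncard)
    (x y : V) (hxy : G.Adj x y)
    (hxNH : x ∈ closedNbhdSet G H) (hxNC : x ∉ commonNbrs G H)
    (hyNH : y ∉ closedNbhdSet G H) : False := by
  classical
  obtain ⟨m, hm4, f, hinj, hrange, hadj⟩ := hH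
  haveI : NeZero m := ⟨by omega⟩
  have hm11 : 11 ≤ m := by
    have h1 := no_small_hole G hG H ⟨m, hm4, f, hinj, hrange, hadj⟩
    have h2 : H.ncard = m := by rw [← hrange]; exact hole_ncard G m hm4 f hinj
    omega
  -- y is adjacent to nothing in H, and not in H
  have hyf : ∀ i, ¬ G.Adj y (f i) ∧ y ≠ f i := by
    intro i
    have hfH : f i ∈ H := by rw [← hrange]; exact Set.mem_range_self i
    constructor
    · intro hA
      exact hyNH (Set.mem_biUnion hfH (Set.mem_insert_iff.mpr (Or.inr hA.symm)))
    · intro hE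
      exact hyNH (Set.mem_biUnion hfH (Set.mem_insert_iff.mpr (Or.inl hE)))
  -- x is not on H
  have hxf : ∀ i, x ≠ f i := by
    intro i hE
    have hfH : f i ∈ H := by rw [← hrange]; exact Set.mem_range_self i
    apply hyNH
    refine Set.mem_biUnion hfH ?_
    right
    show G.Adj (f i) y
    rw [← hE]
    exact hxy
  -- x has a neighbor on H
  have hex : ∃ i, G.Adj x (f i) := by
    obtain ⟨v, hvH, hv⟩ := Set.mem_iUnion₂.mp hxNH
    obtain ⟨i, rfl⟩ := hrange ▸ hvH
    rcases Set.mem_insert_iff.mp hv with h | h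
    · exact absurd h (hxf i)
    · exact ⟨i, h.symm⟩
  -- x misses some vertex of H
  have hnex : ∃ i, ¬ G.Adj x (f i) := by
    by_contra hcon
    push_neg at hcon
    apply hxNC
    intro v hvH
    obtain ⟨i, rfl⟩ := hrange ▸ hvH
    exact hcon i
  -- a start: s with x ~ f s and x ≁ f (s-1)
  have hstart : ∃ s : ZMod m, G.Adj x (f s) ∧ ¬ G.Adj x (f (s - 1)) := by
    by_contra hcon
    push_neg at hcon
    obtain ⟨i0, hi0⟩ := hex
    obtain ⟨i1, hi1⟩ := hnex
    have hall : ∀ k : ℕ, G.Adj x (f (i0 - (k : ZMod m))) := by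
      intro k
      induction k with
      | zero => simpa using hi0
      | succ t ih =>
        have := hcon _ ih
        have e : i0 - ((t : ZMod m)) - 1 = i0 - ((t + 1 : ℕ) : ZMod m) := by push_cast; ring
        rwa [e] at this
    apply hi1
    have := hall ((i0 - i1).val)
    rwa [ZMod.natCast_rightInverse (i0 - i1), show i0 - (i0 - i1) = i1 by ring] at this
  obtain ⟨s, hAs, hAsm⟩ := hstart
  -- basic cast conversions
  have hcm1 : s + ((m - 1 : ℕ) : ZMod m) = s - 1 := by
    have h0 : ((m - 1 : ℕ) : ZMod m) + ((1 : ℕ) : ZMod m) = ((m : ℕ) : ZMod m) := by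
      rw [← Nat.cast_add]
      congr 1
      omega
    rw [Nat.cast_one, ZMod.natCast_self] at h0
    linear_combination h0
  have hcm2 : s + ((m - 2 : ℕ) : ZMod m) = s - 2 := by
    have h0 : ((m - 2 : ℕ) : ZMod m) + ((2 : ℕ) : ZMod m) = ((m : ℕ) : ZMod m) := by
      rw [← Nat.cast_add]
      congr 1
      omega
    rw [Nat.cast_ofNat, ZMod.natCast_self] at h0
    linear_combination h0
  have hAs0 : G.Adj x (f (s + ((0 : ℕ) : ZMod m))) := by
    rw [Nat.cast_zero, add_zero]; exact hAs
  have hAsm' : ¬ G.Adj x (f (s + ((m - 1 : ℕ) : ZMod m))) := by rw [hcm1]; exact hAsm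
  -- the run length r
  obtain ⟨i1, hi1⟩ := hnex
  have hwit : 1 ≤ (i1 - s).val ∧ ¬ G.Adj x (f (s + (((i1 - s).val : ℕ) : ZMod m))) := by
    constructor
    · have hne : i1 ≠ s := fun h => hi1 (h ▸ hAs)
      have hv : (((i1 - s).val : ℕ) : ZMod m) = i1 - s := ZMod.natCast_rightInverse _
      rcases Nat.eq_zero_or_pos (i1 - s).val with h0 | h1'
      · rw [h0, Nat.cast_zero] at hv
        exact absurd (by linear_combination -hv : i1 = s) hne
      · omega
    · rw [ZMod.natCast_rightInverse (i1 - s), show s + (i1 - s) = i1 by ring]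
      exact hi1
  have hexR : ∃ k : ℕ, 1 ≤ k ∧ ¬ G.Adj x (f (s + (k : ZMod m))) := ⟨(i1 - s).val, hwit⟩
  obtain ⟨hr1, hnr⟩ := Nat.find_spec hexR
  set r := Nat.find hexR with hrdef
  have hrm : r < m := by
    have h1 : r ≤ (i1 - s).val := Nat.find_min' hexR hwit
    have h2 : (i1 - s).val < m := ZMod.val_lt _
    omega
  have hrun : ∀ j : ℕ, j < r → G.Adj x (f (s + (j : ZMod m))) := by
    intro j hj
    rcases Nat.eq_zero_or_pos j with rfl | hj1
    · exact hAs0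
    · by_contra hc
      exact Nat.find_min hexR hj ⟨hj1, hc⟩
  -- abbreviation for offset-distinctness of hole vertices
  have hfne : ∀ o1 o2 : ℕ, o1 < m → o2 < m → o1 ≠ o2 →
      f (s + (o1 : ZMod m)) ≠ f (s + (o2 : ZMod m)) := by
    intro o1 o2 ho1 ho2 hne h
    exact hne ((hole_eq_off s ho1 ho2).mp (hinj h))
  have hAO := hole_adj_off G m hm4 f hadj s
  rcases Nat.lt_or_ge r 4 with hr4 | hr4
  · -- r = 1, 2 or 3 : small structures
    interval_cases r
    · -- r = 1 : long claw centred at f s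
      have hA1n : ¬ G.Adj x (f (s + ((1:ℕ) : ZMod m))) := hnr
      have hA2n : ¬ G.Adj x (f (s + ((2:ℕ) : ZMod m))) := by
        have h1' : ¬ G.Adj x (f (s + 1)) := by
          rw [show (s + 1 : ZMod m) = s + ((1:ℕ) : ZMod m) by rw [Nat.cast_one]]
          exact hA1n
        have h2' := gap2 G hG m hm11 f hinj hadj x hxf s hAs h1'
        rw [show s + ((2:ℕ) : ZMod m) = s + 2 by push_cast; ring]
        exact h2'
      have hAm2n : ¬ G.Adj x (f (s + ((m-2:ℕ) : ZMod m))) := by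
        obtain ⟨hinjR, hadjR⟩ := hole_reverse G m f hinj hadj
        have h1' : ¬ G.Adj x ((fun t : ZMod m => f (-t)) (-s + 1)) := by
          show ¬ G.Adj x (f (-(-s + 1)))
          rw [show -(-s + 1) = s - 1 by ring]
          exact hAsm
        have h0' : G.Adj x ((fun t : ZMod m => f (-t)) (-s)) := by
          show G.Adj x (f (-(-s)))
          rw [neg_neg]
          exact hAs
        have h2' := gap2 G hG m hm11 _ hinjR hadjR x (fun i => hxf (-i)) (-s) h0' h1'
        have h3' : ¬ G.Adj x (f (-(-s + 2))) := h2'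
        rw [show -(-s + 2) = s - 2 by ring] at h3'
        rw [hcm2]
        exact h3'
      set S : Set V := {x, y, f (s + ((0:ℕ) : ZMod m)), f (s + ((1:ℕ) : ZMod m)),
        f (s + ((2:ℕ) : ZMod m)), f (s + ((m-1:ℕ) : ZMod m)), f (s + ((m-2:ℕ) : ZMod m))} with hS
      have hsmall : IsIntervalGraph (G.induce S) :=
        prereduced_small G hG S ((ncard7 _ _ _ _ _ _ _).trans (by norm_num))
      refine claw_not_interval (G.induce S)
        ⟨f (s + ((0:ℕ) : ZMod m)), by simp [hS]⟩
        ⟨f (s + ((m-1:ℕ) : ZMod m)), by simp [hS]⟩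
        ⟨f (s + ((1:ℕ) : ZMod m)), by simp [hS]⟩
        ⟨x, by simp [hS]⟩
        ⟨f (s + ((m-2:ℕ) : ZMod m)), by simp [hS]⟩
        ⟨f (s + ((2:ℕ) : ZMod m)), by simp [hS]⟩
        ⟨y, by simp [hS]⟩
        ?_ ?_ ?_ ?_ ?_ ?_ ?_ ?_ ?_ ?_ ?_ ?_ ?_ ?_ ?_ ?_ ?_ ?_ hsmall
      · exact (hAO 0 (m-1) (by omega) (by omega)).mpr (by omega)
      · exact (hAO 0 1 (by omega) (by omega)).mpr (by omega)
      · exact hAs0.symm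
      · exact (hAO (m-1) (m-2) (by omega) (by omega)).mpr (by omega)
      · exact (hAO 1 2 (by omega) (by omega)).mpr (by omega)
      · exact hxy
      · exact induce_ne _ _ (hfne (m-1) 1 (by omega) (by omega) (by omega))
      · exact induce_ne _ _ (Ne.symm (hxf _))
      · exact induce_ne _ _ (Ne.symm (hxf _))
      · exact induce_ne _ _ (hfne (m-2) 0 (by omega) (by omega) (by omega))
      · exact induce_ne _ _ (hfne 2 0 (by omega) (by omega) (by omega))
      · exact induce_ne _ _ ((hyf _).2)
      · exact fun h => (by omega : ¬ _) ((hAO (m-1) 1 (by omega) (by omega)).mp h)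
      · exact fun h => hAsm' h.symm
      · exact fun h => hA1n h.symm
      · exact fun h => (by omega : ¬ _) ((hAO (m-2) 0 (by omega) (by omega)).mp h)
      · exact fun h => (by omega : ¬ _) ((hAO 2 0 (by omega) (by omega)).mp h)
      · exact (hyf _).1
    · -- r = 2 : net
      have hA1 : G.Adj x (f (s + ((1:ℕ) : ZMod m))) := hrun 1 (by omega)
      have hA2n : ¬ G.Adj x (f (s + ((2:ℕ) : ZMod m))) := hnr
      set S : Set V := {x, y, f (s + ((0:ℕ) : ZMod m)), f (s + ((1:ℕ) : ZMod m)),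
        f (s + ((2:ℕ) : ZMod m)), f (s + ((m-1:ℕ) : ZMod m))} with hS
      have hsmall : IsIntervalGraph (G.induce S) :=
        prereduced_small G hG S ((ncard6 _ _ _ _ _ _).trans (by norm_num))
      refine net_not_interval (G.induce S)
        ⟨x, by simp [hS]⟩
        ⟨f (s + ((0:ℕ) : ZMod m)), by simp [hS]⟩
        ⟨f (s + ((1:ℕ) : ZMod m)), by simp [hS]⟩
        ⟨y, by simp [hS]⟩
        ⟨f (s + ((m-1:ℕ) : ZMod m)), by simp [hS]⟩
        ⟨f (s + ((2:ℕ) : ZMod m)), by simp [hS]⟩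
        ?_ ?_ ?_ ?_ ?_ ?_ ?_ ?_ ?_ ?_ ?_ ?_ ?_ ?_ ?_ ?_ ?_ ?_ hsmall
      · exact hAs0
      · exact hA1
      · exact (hAO 0 1 (by omega) (by omega)).mpr (by omega)
      · exact hxy.symm
      · exact (hAO (m-1) 0 (by omega) (by omega)).mpr (by omega)
      · exact (hAO 2 1 (by omega) (by omega)).mpr (by omega)
      · exact induce_ne _ _ ((hyf _).2)
      · exact induce_ne _ _ ((hyf _).2)
      · exact induce_ne _ _ (Ne.symm (hxf _))
      · exact induce_ne _ _ (hfne (m-1) 1 (by omega) (by omega) (by omega))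
      · exact induce_ne _ _ (Ne.symm (hxf _))
      · exact induce_ne _ _ (hfne 2 0 (by omega) (by omega) (by omega))
      · exact (hyf _).1
      · exact (hyf _).1
      · exact fun h => hAsm' h.symm
      · exact fun h => (by omega : ¬ _) ((hAO (m-1) 1 (by omega) (by omega)).mp h)
      · exact fun h => hA2n h.symm
      · exact fun h => (by omega : ¬ _) ((hAO 2 0 (by omega) (by omega)).mp h)
    · -- r = 3 : dagger
      have hA1 : G.Adj x (f (s + ((1:ℕ) : ZMod m))) := hrun 1 (by omega)
      have hA2 : G.Adj x (f (s + ((2:ℕ) : ZMod m))) := hrun 2 (by omega)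
      have hA3n : ¬ G.Adj x (f (s + ((3:ℕ) : ZMod m))) := hnr
      set S : Set V := {x, y, f (s + ((0:ℕ) : ZMod m)), f (s + ((1:ℕ) : ZMod m)),
        f (s + ((2:ℕ) : ZMod m)), f (s + ((3:ℕ) : ZMod m)), f (s + ((m-1:ℕ) : ZMod m))} with hS
      have hsmall : IsIntervalGraph (G.induce S) :=
        prereduced_small G hG S ((ncard7 _ _ _ _ _ _ _).trans (by norm_num))
      refine dagger_not_interval (G.induce S)
        ⟨y, by simp [hS]⟩
        ⟨x, by simp [hS]⟩
        ⟨f (s + ((m-1:ℕ) : ZMod m)), by simp [hS]⟩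
        ⟨f (s + ((0:ℕ) : ZMod m)), by simp [hS]⟩
        ⟨f (s + ((1:ℕ) : ZMod m)), by simp [hS]⟩
        ⟨f (s + ((2:ℕ) : ZMod m)), by simp [hS]⟩
        ⟨f (s + ((3:ℕ) : ZMod m)), by simp [hS]⟩
        ?_ ?_ ?_ ?_ ?_ ?_ ?_ ?_ ?_ ?_ ?_ ?_ ?_ ?_ ?_ ?_ ?_ ?_ ?_ ?_ hsmall
      · exact (hAO (m-1) 0 (by omega) (by omega)).mpr (by omega)
      · exact (hAO 0 1 (by omega) (by omega)).mpr (by omega)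
      · exact (hAO 1 2 (by omega) (by omega)).mpr (by omega)
      · exact (hAO 2 3 (by omega) (by omega)).mpr (by omega)
      · exact hAs0
      · exact hA1
      · exact hA2
      · exact hxy.symm
      · exact induce_ne _ _ (hfne 0 2 (by omega) (by omega) (by omega))
      · exact induce_ne _ _ ((hyf _).2)
      · exact induce_ne _ _ ((hyf _).2)
      · exact induce_ne _ _ ((hyf _).2)
      · exact induce_ne _ _ (hxf _)
      · exact induce_ne _ _ (hxf _)
      · exact fun h => (by omega : ¬ _) ((hAO 0 2 (by omega) (by omega)).mp h)
      · exact (hyf _).1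
      · exact (hyf _).1
      · exact (hyf _).1
      · exact hAsm'
      · exact hA3n
  · -- r ≥ 4
    by_cases hsingle : ∀ i : ZMod m, G.Adj x (f i) → ∃ j : ℕ, j < r ∧ i = s + (j : ZMod m)
    · -- single run : a shorter congenial hole exists, contradiction with minimality
      have hAe : G.Adj x (f (s + ((r - 1 : ℕ) : ZMod m) + ((m - r + 1 : ℕ) : ZMod m))) := by
        have hsum : ((r - 1 : ℕ) : ZMod m) + ((m - r + 1 : ℕ) : ZMod m) = 0 := by
          rw [← Nat.cast_add, show (r - 1) + (m - r + 1) = m by omega, ZMod.natCast_self]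
        rw [add_assoc, hsum, add_zero]
        exact hAs
      have hGap : ∀ t : ℕ, 1 ≤ t → t ≤ m - r →
          ¬ G.Adj x (f (s + ((r - 1 : ℕ) : ZMod m) + (t : ZMod m))) := by
        intro t h1t h2t hA
        rw [add_assoc, ← Nat.cast_add] at hA
        obtain ⟨j, hj, hje⟩ := hsingle _ hA
        have := (hole_eq_off s (show r - 1 + t < m by omega) (show j < m by omega)).mp hje
        omega
      obtain ⟨C, hChole, hCn, hCx, hCmem, hCcov⟩ := hole_extend G m hm11 f hinj hadj x hxf
        (s + ((r - 1 : ℕ) : ZMod m)) (m - r) (by omega) (by omega)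
        (hrun (r - 1) (by omega)) hAe hGap
      have hHn : H.ncard = m := by rw [← hrange]; exact hole_ncard G m hm4 f hinj
      have hcong : Congenial G H C := by
        constructor
        · intro v hv
          rw [← hrange] at hv
          obtain ⟨u, rfl⟩ := hv
          have hom : (u - s).val < m := ZMod.val_lt _
          have hou : u = s + (((u - s).val : ℕ) : ZMod m) := by
            rw [ZMod.natCast_rightInverse (u - s)]; ring
          rcases Nat.lt_or_ge (u - s).val r with hor | hor
          · refine Set.mem_biUnion hCx (Set.mem_insert_of_mem _ ?_)
            show G.Adj x (f u)
            rw [hou]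
            exact hrun _ hor
          · have h8 := hCmem ((u - s).val - (r - 1)) (by omega)
            have he : s + ((r - 1 : ℕ) : ZMod m) + (((u - s).val - (r - 1) : ℕ) : ZMod m) = u := by
              rw [add_assoc, ← Nat.cast_add,
                show (r - 1) + ((u - s).val - (r - 1)) = (u - s).val by omega]
              exact hou.symm
            rw [he] at h8
            exact Set.mem_biUnion h8 (Set.mem_insert _ _)
        · intro v hvC
          rcases hCcov v hvC with rfl | ⟨t, ht, rfl⟩
          · exact hxNH
          · have hmem : f (s + ((r - 1 : ℕ) : ZMod m) + (t : ZMod m)) ∈ H := by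
              rw [← hrange]; exact Set.mem_range_self _
            exact Set.mem_biUnion hmem (Set.mem_insert _ _)
      have hfin := hmin C hChole hcong
      rw [hHn, hCn] at hfin
      omega
    · -- several runs : long claw centred at x
      push_neg at hsingle
      obtain ⟨u, hAu, hu⟩ := hsingle
      -- walk back from u to a second start u'
      have hwit2 : 1 ≤ (u - (s - 1)).val ∧
          ¬ G.Adj x (f (u - (((u - (s - 1)).val : ℕ) : ZMod m))) := by
        constructor
        · have hne : u ≠ s - 1 := fun h => hAsm (h ▸ hAu)
          have hv : (((u - (s - 1)).val : ℕ) : ZMod m) = u - (s - 1) :=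
            ZMod.natCast_rightInverse _
          rcases Nat.eq_zero_or_pos (u - (s - 1)).val with h0 | h1'
          · rw [h0, Nat.cast_zero] at hv
            exact absurd (by linear_combination -hv : u = s - 1) hne
          · omega
        · rw [ZMod.natCast_rightInverse (u - (s - 1)), show u - (u - (s - 1)) = s - 1 by ring]
          exact hAsm
      have hexK : ∃ k : ℕ, 1 ≤ k ∧ ¬ G.Adj x (f (u - (k : ZMod m))) :=
        ⟨(u - (s - 1)).val, hwit2⟩
      obtain ⟨hk01, hk0n⟩ := Nat.find_spec hexK
      set k0 := Nat.find hexK with hk0def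
      have hk0m : k0 < m := by
        have h1 : k0 ≤ (u - (s - 1)).val := Nat.find_min' hexK hwit2
        have h2 : (u - (s - 1)).val < m := ZMod.val_lt _
        omega
      have hk0run : ∀ j : ℕ, j < k0 → G.Adj x (f (u - (j : ZMod m))) := by
        intro j hj
        rcases Nat.eq_zero_or_pos j with rfl | hj1
        · rw [Nat.cast_zero, sub_zero]; exact hAu
        · by_contra hc
          exact Nat.find_min hexK hj ⟨hj1, hc⟩
      set u' : ZMod m := u - ((k0 : ℕ) : ZMod m) + 1 with hu'def
      have hu'A : G.Adj x (f u') := by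
        have he : u' = u - ((k0 - 1 : ℕ) : ZMod m) := by
          rw [hu'def]
          have : ((k0 : ℕ) : ZMod m) = ((k0 - 1 : ℕ) : ZMod m) + 1 := by
            rw [show (k0 : ℕ) = (k0 - 1) + 1 by omega]
            push_cast
            ring
          rw [this]
          ring
        rw [he]
        exact hk0run (k0 - 1) (by omega)
      have hu's : ¬ G.Adj x (f (u' - 1)) := by
        rw [hu'def, show u - ((k0 : ℕ) : ZMod m) + 1 - 1 = u - ((k0 : ℕ) : ZMod m) by ring]
        exact hk0n
      have hu'ne : u' ≠ s := by
        intro h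
        have hue : u = s + ((k0 - 1 : ℕ) : ZMod m) := by
          rw [← h, hu'def]
          have : ((k0 : ℕ) : ZMod m) = ((k0 - 1 : ℕ) : ZMod m) + 1 := by
            rw [show (k0 : ℕ) = (k0 - 1) + 1 by omega]
            push_cast
            ring
          rw [this]
          ring
        rcases Nat.lt_or_ge (k0 - 1) r with hlt | hge
        · exact hu (k0 - 1) hlt hue
        · have h9 := hk0run (k0 - 1 - r) (by omega)
          have he : u - ((k0 - 1 - r : ℕ) : ZMod m) = s + ((r : ℕ) : ZMod m) := by
            rw [hue]
            have : ((k0 - 1 : ℕ) : ZMod m) = ((k0 - 1 - r : ℕ) : ZMod m) + ((r : ℕ) : ZMod m) := by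
              rw [← Nat.cast_add]
              congr 1
              omega
            rw [this]
            ring
          rw [he] at h9
          exact hnr h9
      set ov := (u' - s).val with hovdef
      have hovm : ov < m := ZMod.val_lt _
      have hov : u' = s + ((ov : ℕ) : ZMod m) := by
        rw [hovdef, ZMod.natCast_rightInverse (u' - s)]; ring
      have hov0 : ov ≠ 0 := by
        intro h
        rw [h, Nat.cast_zero, add_zero] at hov
        exact hu'ne hov
      have hu'soff : ¬ G.Adj x (f (s + ((ov - 1 : ℕ) : ZMod m))) := by
        have he : s + ((ov - 1 : ℕ) : ZMod m) = u' - 1 := by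
          rw [hov]
          have : ((ov : ℕ) : ZMod m) = ((ov - 1 : ℕ) : ZMod m) + 1 := by
            rw [show (ov : ℕ) = (ov - 1) + 1 by omega]
            push_cast
            ring
          rw [this]
          ring
        rw [he]
        exact hu's
      have hovr : r < ov := by
        rcases Nat.lt_or_ge r ov with h | h
        · exact h
        · exfalso
          rcases Nat.lt_or_ge ov r with h2 | h2
          · -- ov ≤ r - 1 : then ov - 1 < r, contradiction with hu'soff
            exact hu'soff (hrun (ov - 1) (by omega))
          · -- ov = r : contradiction with hnr
            have : ov = r := by omega
            rw [hov, this] at hu'A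
            exact hnr hu'A
      have hovm1 : ov ≠ m - 1 := by
        intro h
        rw [hov, h, hcm1] at hu'A
        exact hAsm hu'A
      have hAu' : G.Adj x (f (s + ((ov : ℕ) : ZMod m))) := by rw [← hov]; exact hu'A
      -- long claw centred at x
      set S : Set V := {x, f (s + ((0:ℕ) : ZMod m)), f (s + ((m-1:ℕ) : ZMod m)),
        f (s + ((r-1:ℕ) : ZMod m)), f (s + ((r:ℕ) : ZMod m)),
        f (s + ((ov:ℕ) : ZMod m)), f (s + ((ov-1:ℕ) : ZMod m))} with hS
      have hsmall : IsIntervalGraph (G.induce S) :=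
        prereduced_small G hG S ((ncard7 _ _ _ _ _ _ _).trans (by norm_num))
      refine claw_not_interval (G.induce S)
        ⟨x, by simp [hS]⟩
        ⟨f (s + ((0:ℕ) : ZMod m)), by simp [hS]⟩
        ⟨f (s + ((r-1:ℕ) : ZMod m)), by simp [hS]⟩
        ⟨f (s + ((ov:ℕ) : ZMod m)), by simp [hS]⟩
        ⟨f (s + ((m-1:ℕ) : ZMod m)), by simp [hS]⟩
        ⟨f (s + ((r:ℕ) : ZMod m)), by simp [hS]⟩
        ⟨f (s + ((ov-1:ℕ) : ZMod m)), by simp [hS]⟩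
        ?_ ?_ ?_ ?_ ?_ ?_ ?_ ?_ ?_ ?_ ?_ ?_ ?_ ?_ ?_ ?_ ?_ ?_ hsmall
      · exact hAs0
      · exact hrun (r - 1) (by omega)
      · exact hAu'
      · exact (hAO 0 (m-1) (by omega) (by omega)).mpr (by omega)
      · exact (hAO (r-1) r (by omega) (by omega)).mpr (by omega)
      · exact (hAO ov (ov-1) (by omega) (by omega)).mpr (by omega)
      · exact induce_ne _ _ (hfne 0 (r-1) (by omega) (by omega) (by omega))
      · exact induce_ne _ _ (hfne 0 ov (by omega) (by omega) (by omega))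
      · exact induce_ne _ _ (hfne (r-1) ov (by omega) (by omega) (by omega))
      · exact induce_ne _ _ (Ne.symm (hxf _))
      · exact induce_ne _ _ (Ne.symm (hxf _))
      · exact induce_ne _ _ (Ne.symm (hxf _))
      · exact fun h => (by omega : ¬ _) ((hAO 0 (r-1) (by omega) (by omega)).mp h)
      · exact fun h => (by omega : ¬ _) ((hAO 0 ov (by omega) (by omega)).mp h)
      · exact fun h => (by omega : ¬ _) ((hAO (r-1) ov (by omega) (by omega)).mp h)
      · exact fun h => hAsm' h.symm
      · exact fun h => hnr h.symm
      · exact fun h => hu'soff h.symm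

lemma walk_cross {V : Type*} (G : SimpleGraph V) (S NH : Set V) :
    ∀ (u v : V), (deleteSet G S).Walk u v → u ∈ NH → v ∉ NH →
      ∃ p q : V, G.Adj p q ∧ p ∈ NH ∧ p ∉ S ∧ q ∉ NH := by
  intro u v w
  induction w with
  | nil => intro hu hv; exact absurd hu hv
  | @cons a c v h p ih =>
    intro hu hv
    by_cases hc : c ∈ NH
    · exact ih hc hv
    · exact ⟨a, c, h.1, hu, h.2.1, hc⟩

/-- For a hole `H` shortest among the holes congenial to it in a
prereduced graph, the common neighbors `N̂(H)` separate `N[H] \ N̂(H)` from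
`V(G) \ N[H]`. -/
theorem stmt_15 {V : Type*} [Fintype V] (G : SimpleGraph V) (hG : Prereduced G)
    (H : Set V) (hH : IsHole G H)
    (hmin : ∀ H' : Set V, IsHole G H' → Congenial G H H' → H.ncard ≤ H'.ncard) :
    ∀ a ∈ closedNbhdSet G H \ commonNbrs G H,
      ∀ b ∈ (Set.univ \ closedNbhdSet G H) \ commonNbrs G H,
        ¬ (deleteSet G (commonNbrs G H)).Reachable a b := by
  intro a ha b hb hr
  obtain ⟨w⟩ := hr
  obtain ⟨p, q, hpq, hpNH, hpS, hqNH⟩ :=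
    walk_cross G (commonNbrs G H) (closedNbhdSet G H) a b w ha.1 hb.1.2
  exact key_no_edge G hG H hH hmin p q hpq hpNH hpS hqNH
end
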